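/- arXiv:2603.27940 — 5 statements merged into one kernel-verified Lean document; each statement's English description precedes it below -/
import Mathlib

section
/- For probability measures μ, ν on ℝ with finite first moments, W₁(μ, ν) = ∫_ℝ |F_μ(x) − F_ν(x)| dx, where F_η(x) = η((−∞, x]) is the cumulative distribution function. -/
open MeasureTheory ProbabilityTheory Filter

noncomputable section

/-- The set of couplings of two measures on `ℝ`. -/
def Couplings (μ ν : Measure ℝ) : Set (Measure (ℝ × ℝ)) :=
  {π | π.map Prod.fst = μ ∧ π.map Prod.snd = ν}

/-- Wasserstein-1 distance, defined via couplings. -/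
def W1 (μ ν : Measure ℝ) : ℝ :=
  sInf ((fun π : Measure (ℝ × ℝ) => ∫ p, |p.1 - p.2| ∂π) '' Couplings μ ν)

/-- The put function `P_η(x) = ∫ (x - t)⁺ η(dt)`. -/
def put (η : Measure ℝ) (x : ℝ) : ℝ := ∫ t, max (x - t) 0 ∂η

/-- Cumulative distribution function of a measure on ℝ. -/
def cdfFn (η : Measure ℝ) (x : ℝ) : ℝ := (η (Set.Iic x)).toReal

open Set

set_option linter.unusedSectionVars false

lemma volume_between (x y : ℝ) :
    volume {t : ℝ | (x ≤ t ∧ t < y) ∨ (y ≤ t ∧ t < x)} = ENNReal.ofReal |x - y| := by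
  rcases le_total x y with h | h
  · have : {t : ℝ | (x ≤ t ∧ t < y) ∨ (y ≤ t ∧ t < x)} = Set.Ico x y := by
      ext t; simp only [Set.mem_setOf_eq, Set.mem_Ico]
      constructor
      · rintro (ht | ht); · exact ht
        · exact absurd (lt_of_le_of_lt (h.trans ht.1) ht.2) (lt_irrefl x)
      · exact Or.inl
    rw [this, Real.volume_Ico, abs_sub_comm, abs_of_nonneg (by linarith)]
  · have : {t : ℝ | (x ≤ t ∧ t < y) ∨ (y ≤ t ∧ t < x)} = Set.Ico y x := by
      ext t; simp only [Set.mem_setOf_eq, Set.mem_Ico]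
      constructor
      · rintro (ht | ht)
        · exact absurd (lt_of_le_of_lt (h.trans ht.1) ht.2) (lt_irrefl y)
        · exact ht
      · exact Or.inr
    rw [this, Real.volume_Ico, abs_of_nonneg (by linarith)]

lemma measurableSet_D (t : ℝ) :
    MeasurableSet {p : ℝ × ℝ | (p.1 ≤ t ∧ t < p.2) ∨ (p.2 ≤ t ∧ t < p.1)} :=
  ((measurableSet_le measurable_fst measurable_const).inter
    (measurableSet_lt measurable_const measurable_snd)).union
  ((measurableSet_le measurable_snd measurable_const).inter
    (measurableSet_lt measurable_const measurable_fst))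

lemma measurableSet_Dbig :
    MeasurableSet {q : ℝ × (ℝ × ℝ) |
      (q.2.1 ≤ q.1 ∧ q.1 < q.2.2) ∨ (q.2.2 ≤ q.1 ∧ q.1 < q.2.1)} :=
  ((measurableSet_le measurable_snd.fst measurable_fst).inter
    (measurableSet_lt measurable_fst measurable_snd.snd)).union
  ((measurableSet_le measurable_snd.snd measurable_fst).inter
    (measurableSet_lt measurable_fst measurable_snd.fst))

lemma lemA (π : Measure (ℝ × ℝ)) [IsFiniteMeasure π] :
    ∫⁻ t : ℝ, π {p : ℝ × ℝ | (p.1 ≤ t ∧ t < p.2) ∨ (p.2 ≤ t ∧ t < p.1)}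
      = ∫⁻ p, ENNReal.ofReal |p.1 - p.2| ∂π := by
  calc ∫⁻ t : ℝ, π {p : ℝ × ℝ | (p.1 ≤ t ∧ t < p.2) ∨ (p.2 ≤ t ∧ t < p.1)}
      = ∫⁻ t : ℝ, ∫⁻ p, {q : ℝ × (ℝ × ℝ) |
        (q.2.1 ≤ q.1 ∧ q.1 < q.2.2) ∨ (q.2.2 ≤ q.1 ∧ q.1 < q.2.1)}.indicator 1 (t, p) ∂π := by
        refine lintegral_congr fun t => ?_
        rw [← lintegral_indicator_one (measurableSet_D t)]
        refine lintegral_congr fun p => ?_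
        by_cases hp : (p.1 ≤ t ∧ t < p.2) ∨ (p.2 ≤ t ∧ t < p.1) <;>
          simp [Set.indicator_apply, hp]
    _ = ∫⁻ p, ∫⁻ t : ℝ, {q : ℝ × (ℝ × ℝ) |
        (q.2.1 ≤ q.1 ∧ q.1 < q.2.2) ∨ (q.2.2 ≤ q.1 ∧ q.1 < q.2.1)}.indicator 1 (t, p) ∂volume ∂π := by
        exact lintegral_lintegral_swap ((measurable_one.indicator measurableSet_Dbig).aemeasurable)
    _ = ∫⁻ p, ENNReal.ofReal |p.1 - p.2| ∂π := by
        refine lintegral_congr fun p => ?_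
        have hset : {t : ℝ | (p.1 ≤ t ∧ t < p.2) ∨ (p.2 ≤ t ∧ t < p.1)}
            = Set.Ico p.1 p.2 ∪ Set.Ico p.2 p.1 := rfl
        rw [← volume_between p.1 p.2, hset,
          ← lintegral_indicator_one (measurableSet_Ico.union measurableSet_Ico)]
        refine lintegral_congr fun t => ?_
        by_cases ht : (p.1 ≤ t ∧ t < p.2) ∨ (p.2 ≤ t ∧ t < p.1) <;>
          simp [Set.indicator_apply, ht]

lemma prob_of_coupling {μ ν : Measure ℝ} [IsProbabilityMeasure μ] [IsProbabilityMeasure ν]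
    {π : Measure (ℝ × ℝ)} (hπ : π ∈ Couplings μ ν) : IsProbabilityMeasure π := by
  constructor
  have h : π.map Prod.fst Set.univ = μ Set.univ := by rw [hπ.1]
  rw [Measure.map_apply measurable_fst MeasurableSet.univ, Set.preimage_univ] at h
  rw [h, measure_univ]

lemma lemB {μ ν : Measure ℝ} [IsProbabilityMeasure μ] [IsProbabilityMeasure ν]
    {π : Measure (ℝ × ℝ)} (hπ : π ∈ Couplings μ ν) :
    ∫⁻ t : ℝ, ENNReal.ofReal |cdfFn μ t - cdfFn ν t|
      ≤ ∫⁻ p, ENNReal.ofReal |p.1 - p.2| ∂π := by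
  have : IsProbabilityMeasure π := prob_of_coupling hπ
  rw [← lemA π]
  refine lintegral_mono fun t => ?_
  set A : Set (ℝ × ℝ) := {p | p.1 ≤ t}
  set B : Set (ℝ × ℝ) := {p | p.2 ≤ t}
  have hA : π A = μ (Set.Iic t) := by
    rw [← hπ.1, Measure.map_apply measurable_fst measurableSet_Iic]; rfl
  have hB : π B = ν (Set.Iic t) := by
    rw [← hπ.2, Measure.map_apply measurable_snd measurableSet_Iic]; rfl
  set D : Set (ℝ × ℝ) := {p : ℝ × ℝ | (p.1 ≤ t ∧ t < p.2) ∨ (p.2 ≤ t ∧ t < p.1)}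
  have hAB : π A ≤ π B + π D := by
    refine le_trans (measure_mono ?_) (measure_union_le B D)
    intro p hp
    by_cases h : p.2 ≤ t
    · exact Or.inl h
    · exact Or.inr (Or.inl ⟨hp, lt_of_not_ge h⟩)
  have hBA : π B ≤ π A + π D := by
    refine le_trans (measure_mono ?_) (measure_union_le A D)
    intro p hp
    by_cases h : p.1 ≤ t
    · exact Or.inl h
    · exact Or.inr (Or.inr ⟨hp, lt_of_not_ge h⟩)
  refine ENNReal.ofReal_le_of_le_toReal ?_
  have fA : π A ≠ ⊤ := measure_ne_top π A
  have fB : π B ≠ ⊤ := measure_ne_top π B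
  have fD : π D ≠ ⊤ := measure_ne_top π D
  rw [abs_sub_le_iff]
  unfold cdfFn
  rw [← hA, ← hB]
  constructor
  · have := ENNReal.toReal_mono (by simp [fB, fD]) hAB
    rw [ENNReal.toReal_add fB fD] at this
    linarith
  · have := ENNReal.toReal_mono (by simp [fA, fD]) hBA
    rw [ENNReal.toReal_add fA fD] at this
    linarith

lemma cost_finite {μ ν : Measure ℝ} [IsProbabilityMeasure μ] [IsProbabilityMeasure ν]
    (hμ : Integrable (fun x : ℝ => x) μ) (hν : Integrable (fun x : ℝ => x) ν)
    {π : Measure (ℝ × ℝ)} (hπ : π ∈ Couplings μ ν) :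
    ∫⁻ p, ENNReal.ofReal |p.1 - p.2| ∂π ≠ ⊤ := by
  have : IsProbabilityMeasure π := prob_of_coupling hπ
  have h1 : ∀ p : ℝ × ℝ, ENNReal.ofReal |p.1 - p.2|
      ≤ ENNReal.ofReal |p.1| + ENNReal.ofReal |p.2| := fun p => by
    rw [← ENNReal.ofReal_add (abs_nonneg _) (abs_nonneg _)]
    exact ENNReal.ofReal_le_ofReal (abs_sub _ _)
  refine ne_top_of_le_ne_top ?_ (lintegral_mono h1)
  rw [lintegral_add_left (by fun_prop)]
  have e1 : ∫⁻ p : ℝ × ℝ, ENNReal.ofReal |p.1| ∂π = ∫⁻ x : ℝ, ENNReal.ofReal |x| ∂μ := by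
    rw [← hπ.1, lintegral_map (by fun_prop) measurable_fst]
  have e2 : ∫⁻ p : ℝ × ℝ, ENNReal.ofReal |p.2| ∂π = ∫⁻ x : ℝ, ENNReal.ofReal |x| ∂ν := by
    rw [← hπ.2, lintegral_map (by fun_prop) measurable_snd]
  rw [e1, e2]
  have fμ : ∫⁻ x : ℝ, ENNReal.ofReal |x| ∂μ < ⊤ := by
    have := hμ.2
    simpa [HasFiniteIntegral, Real.nnnorm_abs, ← ofReal_norm, Real.norm_eq_abs] using this
  have fν : ∫⁻ x : ℝ, ENNReal.ofReal |x| ∂ν < ⊤ := by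
    have := hν.2
    simpa [HasFiniteIntegral, Real.nnnorm_abs, ← ofReal_norm, Real.norm_eq_abs] using this
  exact (ENNReal.add_lt_top.mpr ⟨fμ, fν⟩).ne

section Quantile
open Set

/-- raw quantile -/
def Qf (η : Measure ℝ) (u : ℝ) : ℝ := sInf {x | u ≤ cdf η x}

/-- quantile, zeroed outside (0,1) -/
def Qg (η : Measure ℝ) (u : ℝ) : ℝ := if u ∈ Set.Ioo (0:ℝ) 1 then Qf η u else 0

variable (η : Measure ℝ) [IsProbabilityMeasure η]

lemma Qf_nonempty {u : ℝ} (hu : u < 1) : {x | u ≤ cdf η x}.Nonempty := by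
  obtain ⟨x, hx⟩ := ((tendsto_cdf_atTop η).eventually_const_lt hu).exists
  exact ⟨x, hx.le⟩

lemma Qf_bddBelow {u : ℝ} (hu : 0 < u) : BddBelow {x | u ≤ cdf η x} := by
  obtain ⟨x₀, hx₀⟩ := ((tendsto_cdf_atBot η).eventually_lt_const hu).exists
  refine ⟨x₀, fun y hy => ?_⟩
  by_contra h
  exact absurd (le_trans hy (monotone_cdf η (le_of_not_ge h))) (not_le.mpr hx₀)

lemma le_cdf_Qf {u : ℝ} (hu : u ∈ Set.Ioo (0:ℝ) 1) : u ≤ cdf η (Qf η u) := by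
  have key : ∀ x, Qf η u < x → u ≤ cdf η x := by
    intro x hx
    obtain ⟨a, ha, hlt⟩ := Real.lt_sInf_add_pos (Qf_nonempty η hu.2) (sub_pos.mpr hx)
    have hQ : sInf {x | u ≤ cdf η x} = Qf η u := rfl
    exact le_trans ha (monotone_cdf η (by linarith))
  have htd : Tendsto (cdf η) (nhdsWithin (Qf η u) (Ioi (Qf η u))) (nhds (cdf η (Qf η u))) :=
    ((cdf η).right_continuous (Qf η u)).tendsto.mono_left
      (nhdsWithin_mono _ Ioi_subset_Ici_self)
  exact ge_of_tendsto htd (eventually_nhdsWithin_of_forall fun x hx => key x hx)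

lemma Qf_le_iff {u : ℝ} (hu : u ∈ Set.Ioo (0:ℝ) 1) {x : ℝ} :
    Qf η u ≤ x ↔ u ≤ cdf η x := by
  constructor
  · intro h
    exact le_trans (le_cdf_Qf η hu) (monotone_cdf η h)
  · intro h
    exact csInf_le (Qf_bddBelow η hu.1) h

lemma measurable_Qg : Measurable (Qg η) := by
  refine measurable_of_Iic fun x => ?_
  have : Qg η ⁻¹' Iic x =
      ((Ioo (0:ℝ) 1 ∩ Iic (cdf η x)) ∪ ((Ioo (0:ℝ) 1)ᶜ ∩ {u : ℝ | (0:ℝ) ≤ x})) := by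
    ext u
    by_cases hu : u ∈ Ioo (0:ℝ) 1
    · simp only [mem_preimage, mem_Iic, Qg, if_pos hu, mem_union, mem_inter_iff, hu,
        mem_compl_iff, not_true, false_and, or_false, true_and, mem_setOf_eq]
      exact Qf_le_iff η hu
    · simp [Qg, if_neg hu, hu]
  rw [this]
  by_cases hx : (0:ℝ) ≤ x
  · have : {u : ℝ | (0:ℝ) ≤ x} = univ := by simp [hx]
    rw [this]
    exact (measurableSet_Ioo.inter measurableSet_Iic).union
      (measurableSet_Ioo.compl.inter MeasurableSet.univ)
  · have : {u : ℝ | (0:ℝ) ≤ x} = ∅ := by simp [hx]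
    rw [this]
    exact (measurableSet_Ioo.inter measurableSet_Iic).union
      (measurableSet_Ioo.compl.inter MeasurableSet.empty)

instance : IsProbabilityMeasure (volume.restrict (Set.Ioo (0:ℝ) 1)) := by
  constructor
  rw [Measure.restrict_apply_univ, Real.volume_Ioo]
  norm_num

lemma volume_Ioo_inter_Iic {a : ℝ} (h0 : 0 ≤ a) (h1 : a ≤ 1) :
    volume (Ioo (0:ℝ) 1 ∩ Iic a) = ENNReal.ofReal a := by
  rcases lt_or_eq_of_le h1 with h | h
  · have : Ioo (0:ℝ) 1 ∩ Iic a = Ioc 0 a := by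
      ext u
      simp only [mem_inter_iff, mem_Ioo, mem_Iic, mem_Ioc]
      constructor
      · rintro ⟨⟨h1', _⟩, h3⟩; exact ⟨h1', h3⟩
      · rintro ⟨h1', h2⟩; exact ⟨⟨h1', lt_of_le_of_lt h2 h⟩, h2⟩
    rw [this, Real.volume_Ioc, sub_zero]
  · subst h
    have : Ioo (0:ℝ) 1 ∩ Iic 1 = Ioo 0 1 := by
      refine inter_eq_left.mpr fun u hu => le_of_lt hu.2
    rw [this, Real.volume_Ioo]
    norm_num

lemma map_Qg : Measure.map (Qg η) (volume.restrict (Set.Ioo (0:ℝ) 1)) = η := by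
  have : IsProbabilityMeasure (Measure.map (Qg η) (volume.restrict (Set.Ioo (0:ℝ) 1))) :=
    Measure.isProbabilityMeasure_map (measurable_Qg η).aemeasurable
  refine Measure.ext_of_Iic _ _ fun a => ?_
  rw [Measure.map_apply (measurable_Qg η) measurableSet_Iic,
    Measure.restrict_apply ((measurable_Qg η) measurableSet_Iic)]
  have hset : Qg η ⁻¹' Iic a ∩ Ioo 0 1 = Ioo (0:ℝ) 1 ∩ Iic (cdf η a) := by
    ext u
    simp only [mem_inter_iff, mem_preimage, mem_Iic]
    rw [and_comm]
    refine and_congr_right fun hu => ?_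
    rw [Qg, if_pos hu]
    exact Qf_le_iff η hu
  rw [hset, volume_Ioo_inter_Iic (cdf_nonneg η a) (cdf_le_one η a), ofReal_cdf]

end Quantile

section Coupling
open Set

lemma volume_Ioo01_inter_Ioc {b a : ℝ} (hb : 0 ≤ b) (ha : a ≤ 1) :
    volume (Ioo (0:ℝ) 1 ∩ Ioc b a) = ENNReal.ofReal (a - b) := by
  rcases le_or_gt b a with h | h
  · refine le_antisymm ?_ ?_
    · calc volume (Ioo (0:ℝ) 1 ∩ Ioc b a) ≤ volume (Ioc b a) :=
        measure_mono inter_subset_right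
      _ = ENNReal.ofReal (a - b) := Real.volume_Ioc
    · calc ENNReal.ofReal (a - b) = volume (Ioo b a) := Real.volume_Ioo.symm
      _ ≤ volume (Ioo (0:ℝ) 1 ∩ Ioc b a) := by
          refine measure_mono fun u hu => ?_
          exact ⟨⟨lt_of_le_of_lt hb hu.1, lt_of_lt_of_le hu.2 ha⟩, hu.1, hu.2.le⟩
  · rw [Set.Ioc_eq_empty (not_lt.mpr h.le), inter_empty, measure_empty,
      ENNReal.ofReal_of_nonpos (by linarith)]

lemma ofReal_sub_add_ofReal_sub (a b : ℝ) :
    ENNReal.ofReal (a - b) + ENNReal.ofReal (b - a) = ENNReal.ofReal |a - b| := by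
  rcases le_total b a with h | h
  · rw [show ENNReal.ofReal (b - a) = 0 from ENNReal.ofReal_of_nonpos (by linarith),
      add_zero, abs_of_nonneg (by linarith)]
  · rw [ENNReal.ofReal_of_nonpos (by linarith), zero_add, abs_of_nonpos (by linarith),
      neg_sub]

variable (μ ν : Measure ℝ) [IsProbabilityMeasure μ] [IsProbabilityMeasure ν]

lemma measurable_pairQ : Measurable (fun u : ℝ => (Qg μ u, Qg ν u)) :=
  (measurable_Qg μ).prodMk (measurable_Qg ν)

lemma coupling_pi0 :
    Measure.map (fun u : ℝ => (Qg μ u, Qg ν u)) (volume.restrict (Set.Ioo (0:ℝ) 1))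
      ∈ Couplings μ ν := by
  constructor
  · rw [Measure.map_map measurable_fst (measurable_pairQ μ ν)]
    exact map_Qg μ
  · rw [Measure.map_map measurable_snd (measurable_pairQ μ ν)]
    exact map_Qg ν

lemma pi0_D (t : ℝ) :
    Measure.map (fun u : ℝ => (Qg μ u, Qg ν u)) (volume.restrict (Set.Ioo (0:ℝ) 1))
      {p : ℝ × ℝ | (p.1 ≤ t ∧ t < p.2) ∨ (p.2 ≤ t ∧ t < p.1)}
      = ENNReal.ofReal |cdf μ t - cdf ν t| := by
  rw [Measure.map_apply (measurable_pairQ μ ν) (measurableSet_D t),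
    Measure.restrict_apply ((measurable_pairQ μ ν) (measurableSet_D t))]
  have hset : (fun u : ℝ => (Qg μ u, Qg ν u)) ⁻¹'
      {p : ℝ × ℝ | (p.1 ≤ t ∧ t < p.2) ∨ (p.2 ≤ t ∧ t < p.1)} ∩ Ioo 0 1
      = (Ioo (0:ℝ) 1 ∩ Ioc (cdf ν t) (cdf μ t)) ∪ (Ioo (0:ℝ) 1 ∩ Ioc (cdf μ t) (cdf ν t)) := by
    ext u
    simp only [mem_inter_iff, mem_preimage, mem_setOf_eq, mem_union, mem_Ioc]
    constructor
    · rintro ⟨hcond, hu⟩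
      rw [Qg, if_pos hu, Qg, if_pos hu, Qf_le_iff μ hu] at hcond
      rcases hcond with ⟨h1, h2⟩ | ⟨h1, h2⟩
      · rw [← not_le, Qf_le_iff ν hu, not_le] at h2
        exact Or.inl ⟨hu, h2, h1⟩
      · rw [Qf_le_iff ν hu] at h1
        rw [← not_le, Qf_le_iff μ hu, not_le] at h2
        exact Or.inr ⟨hu, h2, h1⟩
    · rintro (⟨hu, h1, h2⟩ | ⟨hu, h1, h2⟩) <;>
        refine ⟨?_, hu⟩ <;>
        rw [Qg, if_pos hu, Qg, if_pos hu]
      · left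
        rw [Qf_le_iff μ hu]
        refine ⟨h2, ?_⟩
        rw [← not_le, Qf_le_iff ν hu, not_le]
        exact h1
      · right
        rw [Qf_le_iff ν hu]
        refine ⟨h2, ?_⟩
        rw [← not_le, Qf_le_iff μ hu, not_le]
        exact h1
  rw [hset, measure_union ?_ (measurableSet_Ioo.inter measurableSet_Ioc),
    volume_Ioo01_inter_Ioc (cdf_nonneg ν t) (cdf_le_one μ t),
    volume_Ioo01_inter_Ioc (cdf_nonneg μ t) (cdf_le_one ν t),
    ofReal_sub_add_ofReal_sub]
  rw [Set.disjoint_left]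
  rintro u ⟨-, h1, h2⟩ ⟨-, h3, h4⟩
  exact absurd (lt_of_le_of_lt h2 h3) (lt_irrefl u)

lemma cost_pi0 :
    ∫⁻ p, ENNReal.ofReal |p.1 - p.2|
        ∂(Measure.map (fun u : ℝ => (Qg μ u, Qg ν u)) (volume.restrict (Set.Ioo (0:ℝ) 1)))
      = ∫⁻ t : ℝ, ENNReal.ofReal |cdf μ t - cdf ν t| := by
  have : IsProbabilityMeasure
      (Measure.map (fun u : ℝ => (Qg μ u, Qg ν u)) (volume.restrict (Set.Ioo (0:ℝ) 1))) :=
    prob_of_coupling (coupling_pi0 μ ν)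
  rw [← lemA]
  exact lintegral_congr fun t => pi0_D μ ν t

end Coupling

theorem W1_eq_integral_cdf_diff (μ ν : Measure ℝ)
    [IsProbabilityMeasure μ] [IsProbabilityMeasure ν]
    (hμ : Integrable (fun x : ℝ => x) μ) (hν : Integrable (fun x : ℝ => x) ν) :
    W1 μ ν = ∫ x : ℝ, |cdfFn μ x - cdfFn ν x| := by
  show sInf ((fun π : Measure (ℝ × ℝ) => ∫ p, |p.1 - p.2| ∂π) '' Couplings μ ν)
      = ∫ x : ℝ, |cdfFn μ x - cdfFn ν x|
  have hcdf : ∀ (η : Measure ℝ) [IsProbabilityMeasure η] (x : ℝ), cdfFn η x = cdf η x :=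
    fun η _ x => (cdf_eq_real η x).symm
  set T : ENNReal := ∫⁻ t : ℝ, ENNReal.ofReal |cdfFn μ t - cdfFn ν t| with hT
  have hTT : T = ∫⁻ t : ℝ, ENNReal.ofReal |cdf μ t - cdf ν t| :=
    lintegral_congr fun t => by rw [hcdf μ t, hcdf ν t]
  set π₀ := Measure.map (fun u : ℝ => (Qg μ u, Qg ν u)) (volume.restrict (Set.Ioo (0:ℝ) 1))
    with hπ₀def
  have hπ₀ : π₀ ∈ Couplings μ ν := coupling_pi0 μ ν
  have hcostπ₀ : ∫⁻ p, ENNReal.ofReal |p.1 - p.2| ∂π₀ = T := by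
    rw [hTT]; exact cost_pi0 μ ν
  have hTfin : T ≠ ⊤ := by rw [← hcostπ₀]; exact cost_finite hμ hν hπ₀
  have hcost : ∀ π : Measure (ℝ × ℝ), π ∈ Couplings μ ν →
      ∫ p, |p.1 - p.2| ∂π = (∫⁻ p, ENNReal.ofReal |p.1 - p.2| ∂π).toReal := by
    intro π hπ
    rw [integral_eq_lintegral_of_nonneg_ae (f := fun p : ℝ × ℝ => |p.1 - p.2|) (ae_of_all _ fun p : ℝ × ℝ => abs_nonneg _)
      ((continuous_fst.sub continuous_snd).abs.aestronglyMeasurable)]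
  have hRHS : ∫ x : ℝ, |cdfFn μ x - cdfFn ν x| = T.toReal := by
    rw [hT, integral_eq_lintegral_of_nonneg_ae (ae_of_all _ fun x : ℝ => abs_nonneg _) ?_]
    have hm : ∀ (η : Measure ℝ) [IsProbabilityMeasure η], Measurable (cdfFn η) := by
      intro η _
      have : Monotone (cdfFn η) := fun a b hab => by
        simp_rw [hcdf η]; exact monotone_cdf η hab
      exact this.measurable
    exact (((hm μ).sub (hm ν)).abs).aestronglyMeasurable
  have hmem : T.toReal ∈
      (fun π : Measure (ℝ × ℝ) => ∫ p, |p.1 - p.2| ∂π) '' Couplings μ ν :=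
    ⟨π₀, hπ₀, by show ∫ p, |p.1 - p.2| ∂π₀ = T.toReal; rw [hcost π₀ hπ₀, hcostπ₀]⟩
  have hlb : ∀ r ∈ (fun π : Measure (ℝ × ℝ) => ∫ p, |p.1 - p.2| ∂π) '' Couplings μ ν,
      T.toReal ≤ r := by
    rintro r ⟨π, hπ, rfl⟩
    show T.toReal ≤ ∫ p, |p.1 - p.2| ∂π
    rw [hcost π hπ]
    refine ENNReal.toReal_mono (cost_finite hμ hν hπ) ?_
    rw [hT]
    exact lemB hπ
  rw [hRHS]
  exact le_antisymm (csInf_le ⟨T.toReal, hlb⟩ hmem) (le_csInf ⟨T.toReal, hmem⟩ hlb)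
end
end

section
/- For finite positive measures η, χ on ℝ with finite first moments and equal total mass, η is dominated by χ in the decreasing convex order (i.e., ∫ f dη ≤ ∫ f dχ for every convex nonincreasing f : ℝ → ℝ) if and only if P_η(x) ≤ P_χ(x) for all x ∈ ℝ. -/
open MeasureTheory ProbabilityTheory Filter

noncomputable section

/-- Decreasing convex order: integrals of convex nonincreasing functions are ordered. -/
def DecConvOrder (η χ : Measure ℝ) : Prop :=
  ∀ f : ℝ → ℝ, ConvexOn ℝ Set.univ f → Antitone f →
    Integrable f η → Integrable f χ → ∫ x, f x ∂η ≤ ∫ x, f x ∂χ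

namespace DCOaux

open Topology

variable {f : ℝ → ℝ}

lemma slope4 (hf : ConvexOn ℝ Set.univ f) {a b c d : ℝ} (hab : a < b) (hbc : b ≤ c)
    (hcd : c < d) : (f b - f a) / (b - a) ≤ (f d - f c) / (d - c) := by
  rcases eq_or_lt_of_le hbc with rfl | h
  · exact hf.slope_mono_adjacent trivial trivial hab hcd
  · exact le_trans (hf.slope_mono_adjacent trivial trivial hab h)
      (hf.slope_mono_adjacent trivial trivial h hcd)

lemma slope_right (hf : ConvexOn ℝ Set.univ f) {a b c : ℝ} (hab : a < b) (hbc : b < c) :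
    (f c - f a) / (c - a) ≤ (f c - f b) / (c - b) :=
  hf.secant_mono_aux3 trivial trivial hab hbc

/-- grid spacing -/
def gδ (j : ℕ) : ℝ := (1/2 : ℝ) ^ j

lemma gδ_pos (j : ℕ) : 0 < gδ j := by unfold gδ; positivity

lemma gδ_succ (j : ℕ) : gδ (j+1) = gδ j / 2 := by rw [gδ, gδ, pow_succ]; ring

lemma gδ_tendsto : Tendsto gδ atTop (𝓝 0) :=
  tendsto_pow_atTop_nhds_zero_of_lt_one (by norm_num) (by norm_num)

/-- number of grid intervals -/
def gK (m j : ℕ) : ℕ := 2 * m * 2 ^ j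

/-- grid nodes -/
def gs (m j : ℕ) (i : ℕ) : ℝ := -(m : ℝ) + i * gδ j

lemma gs_zero (m j : ℕ) : gs m j 0 = -(m:ℝ) := by simp [gs]

lemma gs_succ (m j : ℕ) (i : ℕ) : gs m j (i+1) = gs m j i + gδ j := by
  simp [gs]; ring

lemma gKδ (m j : ℕ) : (gK m j : ℝ) * gδ j = 2 * m := by
  have h2 : ((2:ℝ)) ^ j ≠ 0 := by positivity
  simp only [gK, gδ]
  push_cast
  rw [div_pow, one_pow]
  field_simp

lemma gs_K (m j : ℕ) : gs m j (gK m j) = (m : ℝ) := by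
  have := gKδ m j
  simp only [gs]
  linarith

lemma gs_le {m j : ℕ} {i i' : ℕ} (h : i ≤ i') : gs m j i ≤ gs m j i' := by
  simp only [gs, add_le_add_iff_left]
  exact mul_le_mul_of_nonneg_right (by exact_mod_cast h) (gδ_pos j).le

lemma gs_lt {m j : ℕ} {i i' : ℕ} (h : i < i') : gs m j i < gs m j i' := by
  simp only [gs, add_lt_add_iff_left]
  exact mul_lt_mul_of_pos_right (by exact_mod_cast h) (gδ_pos j)

/-- chord slopes, with `0` beyond the right end of the grid -/
def gσ (f : ℝ → ℝ) (m j : ℕ) (i : ℕ) : ℝ :=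
  if i < gK m j then (f (gs m j (i+1)) - f (gs m j i)) / gδ j else 0

/-- slope of the auxiliary interval to the left of the grid -/
def gσL (f : ℝ → ℝ) (m j : ℕ) : ℝ := (f (gs m j 0) - f (gs m j 0 - gδ j)) / gδ j

/-- coefficients of the puts -/
def ga (f : ℝ → ℝ) (m j : ℕ) (i : ℕ) : ℝ :=
  if i = 0 then gσ f m j 0 - gσL f m j else gσ f m j i - gσ f m j (i-1)

/-- the piecewise linear approximation, as a combination of puts -/
def gP (f : ℝ → ℝ) (m j : ℕ) (x : ℝ) : ℝ :=
  f (gs m j (gK m j)) + ∑ i ∈ Finset.range (gK m j + 1), ga f m j i * max (gs m j i - x) 0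

lemma gσ_nonpos (hant : Antitone f) (m j : ℕ) (i : ℕ) : gσ f m j i ≤ 0 := by
  unfold gσ
  split
  · apply div_nonpos_of_nonpos_of_nonneg _ (gδ_pos j).le
    simp only [sub_nonpos]
    exact hant (gs_le (Nat.le_succ i))
  · exact le_refl 0

lemma gσL_nonpos (hant : Antitone f) (m j : ℕ) : gσL f m j ≤ 0 := by
  apply div_nonpos_of_nonpos_of_nonneg _ (gδ_pos j).le
  simp only [sub_nonpos]
  exact hant (by linarith [gδ_pos j])

/-- slope form of `gσ` -/
lemma gσ_eq (m j : ℕ) {i : ℕ} (h : i < gK m j) :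
    gσ f m j i = (f (gs m j (i+1)) - f (gs m j i)) / (gs m j (i+1) - gs m j i) := by
  rw [gσ, if_pos h, gs_succ]; ring_nf

lemma gσ_mul (m j : ℕ) {i : ℕ} (h : i < gK m j) :
    gσ f m j i * gδ j = f (gs m j (i+1)) - f (gs m j i) := by
  rw [gσ, if_pos h, div_mul_cancel₀]
  exact (gδ_pos j).ne'

lemma gσL_eq (m j : ℕ) :
    gσL f m j = (f (gs m j 0) - f (gs m j 0 - gδ j)) / (gs m j 0 - (gs m j 0 - gδ j)) := by
  rw [gσL]; ring_nf

lemma ga_nonneg (hf : ConvexOn ℝ Set.univ f) (hant : Antitone f) (m j : ℕ) {i : ℕ}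
    (hi : i ≤ gK m j) : 0 ≤ ga f m j i := by
  have hδ := gδ_pos j
  rcases Nat.eq_zero_or_pos i with rfl | hpos
  · rw [ga, if_pos rfl, sub_nonneg, gσL_eq]
    rcases Nat.eq_zero_or_pos (gK m j) with hK | hK
    · rw [gσ, if_neg (by omega)]
      apply div_nonpos_of_nonpos_of_nonneg _ (by linarith)
      simp only [sub_nonpos]
      exact hant (by linarith)
    · rw [gσ_eq m j hK]
      exact slope4 hf (by linarith) le_rfl (gs_lt (by omega : 0 < 0 + 1))
  · obtain ⟨n, rfl⟩ : ∃ n, i = n + 1 := ⟨i - 1, by omega⟩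
    rw [ga, if_neg (by omega), sub_nonneg, Nat.add_sub_cancel]
    have hn : n < gK m j := by omega
    rw [gσ_eq m j hn]
    rcases lt_or_ge (n+1) (gK m j) with h1 | h1
    · rw [gσ_eq m j h1]
      exact slope4 hf (gs_lt (Nat.lt_succ_self n)) le_rfl (gs_lt (Nat.lt_succ_self (n+1)))
    · rw [gσ, if_neg (by omega)]
      rw [← gσ_eq m j hn]
      exact gσ_nonpos hant m j n

/-- The key telescoping identity. -/
lemma sum_telescope (m j : ℕ) (x : ℝ) {k : ℕ} (hk : k ≤ gK m j) :
    ∑ i ∈ Finset.Ico (k+1) (gK m j + 1), ga f m j i * (gs m j i - x)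
      = (f (gs m j k) + gσ f m j k * (x - gs m j k)) - f (gs m j (gK m j)) := by
  set K := gK m j with hK
  set Φ : ℕ → ℝ := fun i => gσ f m j i * (gs m j i - x) - f (gs m j i) with hΦ
  have key : ∀ i, k ≤ i → i < K → ga f m j (i+1) * (gs m j (i+1) - x) = Φ (i+1) - Φ i := by
    intro i _ hiK
    have hδ := (gδ_pos j).ne'
    have hσi : gσ f m j i = (f (gs m j (i+1)) - f (gs m j i)) / gδ j := by
      rw [gσ, if_pos hiK]
    have hfi : f (gs m j (i+1)) - f (gs m j i) = gσ f m j i * gδ j := by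
      rw [hσi]; field_simp
    have hga : ga f m j (i+1) = gσ f m j (i+1) - gσ f m j i := by
      rw [ga, if_neg (Nat.succ_ne_zero i), Nat.add_sub_cancel]
    have hf2 : f (gs m j (i+1)) = f (gs m j i) + gσ f m j i * gδ j := by linarith [hfi]
    simp only [hΦ]
    rw [hga, hf2, gs_succ]
    ring
  rw [Finset.sum_Ico_eq_sum_range]
  have hcount : K + 1 - (k + 1) = K - k := by omega
  rw [hcount]
  have : ∀ r ∈ Finset.range (K - k), ga f m j (k + 1 + r) * (gs m j (k + 1 + r) - x)
      = (fun t => Φ (k + t)) (r+1) - (fun t => Φ (k + t)) r := by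
    intro r hr
    simp only [Finset.mem_range] at hr
    have h1 : k + 1 + r = (k + r) + 1 := by omega
    rw [h1]
    exact key (k + r) (by omega) (by omega)
  rw [Finset.sum_congr rfl this, Finset.sum_range_sub (fun t => Φ (k + t)) (K - k)]
  have h2 : k + (K - k) = K := by omega
  rw [h2]
  have hΦK : Φ K = - f (gs m j K) := by
    simp [hΦ, gσ, hK]
  rw [hΦK]
  simp only [hΦ]
  ring

lemma gP_eval_right (m j : ℕ) {x : ℝ} (hx : gs m j (gK m j) ≤ x) :
    gP f m j x = f (gs m j (gK m j)) := by
  rw [gP]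
  have : ∀ i ∈ Finset.range (gK m j + 1), ga f m j i * max (gs m j i - x) 0 = 0 := by
    intro i hi
    simp only [Finset.mem_range] at hi
    have : gs m j i ≤ x := le_trans (gs_le (Nat.lt_succ_iff.mp hi)) hx
    rw [max_eq_right (by linarith), mul_zero]
  rw [Finset.sum_congr rfl this]
  simp

lemma gP_eval_mid (m j : ℕ) {x : ℝ} {k : ℕ} (hk : k < gK m j) (h1 : gs m j k ≤ x)
    (h2 : x ≤ gs m j (k+1)) :
    gP f m j x = f (gs m j k) + gσ f m j k * (x - gs m j k) := by
  rw [gP, Finset.range_eq_Ico,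
    ← Finset.sum_Ico_consecutive _ (Nat.zero_le (k+1)) (by omega : k + 1 ≤ gK m j + 1)]
  have hz : ∀ i ∈ Finset.Ico 0 (k+1), ga f m j i * max (gs m j i - x) 0 = 0 := by
    intro i hi
    simp only [Finset.mem_Ico] at hi
    have : gs m j i ≤ x := le_trans (gs_le (by omega)) h1
    rw [max_eq_right (by linarith), mul_zero]
  have hpos : ∀ i ∈ Finset.Ico (k+1) (gK m j + 1),
      ga f m j i * max (gs m j i - x) 0 = ga f m j i * (gs m j i - x) := by
    intro i hi
    simp only [Finset.mem_Ico] at hi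
    have : x ≤ gs m j i := le_trans h2 (gs_le hi.1)
    rw [max_eq_left (by linarith)]
  rw [Finset.sum_congr rfl hz, Finset.sum_congr rfl hpos, Finset.sum_const_zero,
    sum_telescope m j x (le_of_lt hk)]
  ring

lemma gP_eval_left (m j : ℕ) {x : ℝ} (hx : x ≤ gs m j 0) :
    gP f m j x = f (gs m j 0) + gσL f m j * (x - gs m j 0) := by
  rw [gP, Finset.range_eq_Ico,
    ← Finset.sum_Ico_consecutive _ (Nat.zero_le 1) (by omega : 1 ≤ gK m j + 1)]
  have hpos : ∀ i ∈ Finset.Ico 1 (gK m j + 1),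
      ga f m j i * max (gs m j i - x) 0 = ga f m j i * (gs m j i - x) := by
    intro i hi
    simp only [Finset.mem_Ico] at hi
    have : x ≤ gs m j i := le_trans hx (gs_le (Nat.zero_le i))
    rw [max_eq_left (by linarith)]
  have h0 : ∑ i ∈ Finset.Ico 0 1, ga f m j i * max (gs m j i - x) 0
      = (gσ f m j 0 - gσL f m j) * (gs m j 0 - x) := by
    rw [Finset.sum_Ico_eq_sum_range]
    simp only [Nat.sub_zero, Finset.sum_range_one, Nat.add_zero]
    rw [ga, if_pos rfl, max_eq_left (by linarith)]
  rw [Finset.sum_congr rfl hpos, h0, sum_telescope m j x (Nat.zero_le _)]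
  ring

/-- the node interval containing a point of the bulk region -/
lemma mid_node (m j : ℕ) {x : ℝ} (hx1 : -(m:ℝ) ≤ x) (hx2 : x < (m:ℝ)) :
    ∃ k, k < gK m j ∧ gs m j k ≤ x ∧ x ≤ gs m j (k+1) := by
  have hδ := gδ_pos j
  set k := ⌊(x + m) / gδ j⌋₊ with hkdef
  have hnn : 0 ≤ (x + m) / gδ j := div_nonneg (by linarith) hδ.le
  have h1 : (k:ℝ) ≤ (x + m) / gδ j := Nat.floor_le hnn
  have h2 : (x + m) / gδ j < k + 1 := Nat.lt_floor_add_one _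
  have hKδ := gKδ m j
  refine ⟨k, ?_, ?_, ?_⟩
  · have : (x + m) / gδ j < (gK m j : ℝ) := by
      rw [div_lt_iff₀ hδ]
      nlinarith
    exact_mod_cast lt_of_le_of_lt h1 this
  · have : (k:ℝ) * gδ j ≤ x + m := (le_div_iff₀ hδ).mp h1
    simp only [gs]
    linarith
  · have : x + m < ((k:ℝ) + 1) * gδ j := (div_lt_iff₀ hδ).mp h2
    simp only [gs]
    push_cast
    nlinarith

lemma gP_mid_bounds (hf : ConvexOn ℝ Set.univ f) (hant : Antitone f) (m j : ℕ) {x : ℝ}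
    (hx1 : -(m:ℝ) ≤ x) (hx2 : x < (m:ℝ)) :
    f (x + gδ j) ≤ gP f m j x ∧ gP f m j x ≤ f (x - gδ j) ∧
      f (m:ℝ) ≤ gP f m j x ∧ gP f m j x ≤ f (-(m:ℝ)) := by
  obtain ⟨k, hk, h1, h2⟩ := mid_node m j hx1 hx2
  have hδ := gδ_pos j
  have heval := gP_eval_mid (f := f) m j hk h1 h2
  have hσ := gσ_nonpos hant m j k
  have hchord : gσ f m j k * gδ j = f (gs m j (k+1)) - f (gs m j k) := gσ_mul m j hk
  have hup : gP f m j x ≤ f (gs m j k) := by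
    rw [heval]
    nlinarith
  have hlo : f (gs m j (k+1)) ≤ gP f m j x := by
    rw [heval]
    have hxk : x - gs m j k ≤ gδ j := by
      have := gs_succ m j k
      linarith
    nlinarith
  have hs1 : x - gδ j ≤ gs m j k := by
    have := gs_succ m j k
    linarith
  have hs2 : gs m j (k+1) ≤ x + gδ j := by
    have := gs_succ m j k
    linarith
  refine ⟨le_trans (hant hs2) hlo, le_trans hup (hant hs1), ?_, ?_⟩
  · refine le_trans ?_ hlo
    have : gs m j (k+1) ≤ gs m j (gK m j) := gs_le (by omega)
    rw [← gs_K m j]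
    exact hant this
  · refine le_trans hup ?_
    rw [← gs_zero m j]
    exact hant (gs_le (Nat.zero_le k))

lemma gσL_eq' (m j : ℕ) :
    gσL f m j = (f (-(m:ℝ)) - f (-(m:ℝ) - gδ j)) / (-(m:ℝ) - (-(m:ℝ) - gδ j)) := by
  rw [gσL, gs_zero]; ring_nf

lemma gσL_mono (hf : ConvexOn ℝ Set.univ f) (m : ℕ) : Monotone (fun j => gσL f m j) := by
  apply monotone_nat_of_le_succ
  intro j
  rw [gσL_eq' m j, gσL_eq' m (j+1)]
  have h1 : gδ (j+1) < gδ j := by rw [gδ_succ]; linarith [gδ_pos j]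
  have h2 := gδ_pos (j+1)
  exact slope_right hf (by linarith) (by linarith)

def gL (f : ℝ → ℝ) (m : ℕ) : ℝ := ⨆ j, gσL f m j

lemma gσL_bddAbove (hant : Antitone f) (m : ℕ) : BddAbove (Set.range fun j => gσL f m j) :=
  ⟨0, by rintro y ⟨j, rfl⟩; exact gσL_nonpos hant m j⟩

lemma gL_nonpos (hant : Antitone f) (m : ℕ) : gL f m ≤ 0 :=
  ciSup_le (gσL_nonpos hant m)

lemma gσL_le_gL (hant : Antitone f) (m j : ℕ) : gσL f m j ≤ gL f m :=
  le_ciSup (gσL_bddAbove hant m) j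

lemma gσL_tendsto (hf : ConvexOn ℝ Set.univ f) (hant : Antitone f) (m : ℕ) :
    Tendsto (fun j => gσL f m j) atTop (𝓝 (gL f m)) :=
  tendsto_atTop_ciSup (gσL_mono hf m) (gσL_bddAbove hant m)

lemma gL_tangent (hf : ConvexOn ℝ Set.univ f) (hant : Antitone f) (m : ℕ) {x : ℝ}
    (hx : x ≤ -(m:ℝ)) : f (-(m:ℝ)) + gL f m * (x + m) ≤ f x := by
  rcases eq_or_lt_of_le hx with rfl | hlt
  · simp
  · obtain ⟨j, hj⟩ : ∃ j : ℕ, gδ j < -(m:ℝ) - x := by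
      obtain ⟨j, hj⟩ := exists_pow_lt_of_lt_one (by linarith : (0:ℝ) < -(m:ℝ) - x)
        (by norm_num : (1/2:ℝ) < 1)
      exact ⟨j, hj⟩
    have hslope : (f (-(m:ℝ)) - f x) / (-(m:ℝ) - x) ≤ gσL f m j := by
      rw [gσL_eq' m j]
      exact slope_right hf (by linarith) (by linarith [gδ_pos j])
    have h1 : (f (-(m:ℝ)) - f x) / (-(m:ℝ) - x) ≤ gL f m :=
      le_trans hslope (gσL_le_gL hant m j)
    have h2 : f (-(m:ℝ)) - f x ≤ gL f m * (-(m:ℝ) - x) :=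
      (div_le_iff₀ (by linarith)).mp h1
    have h3 : gL f m * (x + m) = -(gL f m * (-(m:ℝ) - x)) := by ring
    linarith [h2, h3.le, h3.ge]

def gT (f : ℝ → ℝ) (m : ℕ) (x : ℝ) : ℝ :=
  f (min (max x (-(m:ℝ))) (m:ℝ)) + gL f m * min (x + m) 0

lemma gT_continuous (hfc : Continuous f) (m : ℕ) : Continuous (gT f m) := by
  apply Continuous.add
  · exact hfc.comp ((continuous_id.max continuous_const).min continuous_const)
  · exact continuous_const.mul ((continuous_id.add continuous_const).min continuous_const)

lemma gT_eq_mid (m : ℕ) {x : ℝ} (h1 : -(m:ℝ) ≤ x) (h2 : x ≤ (m:ℝ)) : gT f m x = f x := by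
  rw [gT, max_eq_left h1, min_eq_left h2, min_eq_right (by linarith), mul_zero, add_zero]

lemma gT_eq_right (m : ℕ) {x : ℝ} (h : (m:ℝ) ≤ x) : gT f m x = f (m:ℝ) := by
  have hm : (0:ℝ) ≤ (m:ℝ) := Nat.cast_nonneg m
  rw [gT, max_eq_left (by linarith), min_eq_right h, min_eq_right (by linarith), mul_zero,
    add_zero]

lemma gT_eq_left (m : ℕ) {x : ℝ} (h : x ≤ -(m:ℝ)) :
    gT f m x = f (-(m:ℝ)) + gL f m * (x + m) := by
  have hm : (0:ℝ) ≤ (m:ℝ) := Nat.cast_nonneg m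
  rw [gT, max_eq_right h, min_eq_left (by linarith), min_eq_left (by linarith)]

lemma gT_bound (hf : ConvexOn ℝ Set.univ f) (hant : Antitone f) (m : ℕ) (x : ℝ) :
    |gT f m x| ≤ |f x| + |f 0| := by
  have hm : (0:ℝ) ≤ (m:ℝ) := Nat.cast_nonneg m
  rcases le_or_gt x (-(m:ℝ)) with h | h
  · rw [gT_eq_left m h]
    have hub := gL_tangent hf hant m h
    have hlb : (0:ℝ) ≤ gL f m * (x + m) :=
      mul_nonneg_of_nonpos_of_nonpos (gL_nonpos hant m) (by linarith)
    have h0 : f 0 ≤ f (-(m:ℝ)) := hant (by linarith)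
    rw [abs_le]
    constructor
    · have := neg_abs_le (f 0)
      have := abs_nonneg (f x)
      linarith
    · have := le_abs_self (f x)
      have := abs_nonneg (f 0)
      linarith
  · rcases le_or_gt (m:ℝ) x with h2 | h2
    · rw [gT_eq_right m h2]
      have hxm : f x ≤ f (m:ℝ) := hant h2
      have h0 : f (m:ℝ) ≤ f 0 := hant hm
      rw [abs_le]
      constructor
      · have := neg_abs_le (f x); have := abs_nonneg (f 0); linarith
      · have := le_abs_self (f 0); have := abs_nonneg (f x); linarith
    · rw [gT_eq_mid m (by linarith) (by linarith)]
      have := abs_nonneg (f 0)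
      linarith [le_refl |f x|]

lemma gT_tendsto (f : ℝ → ℝ) (x : ℝ) : Tendsto (fun m => gT f m x) atTop (𝓝 (f x)) := by
  apply tendsto_atTop_of_eventually_const (i₀ := ⌈|x|⌉₊)
  intro m hm
  have h1 : |x| ≤ (m:ℝ) := le_trans (Nat.le_ceil _) (by exact_mod_cast hm)
  have h2 := abs_le.mp h1
  exact gT_eq_mid m h2.1 h2.2

/-- pointwise convergence of the piecewise linear approximations to `gT` -/
lemma gP_tendsto_gT (hf : ConvexOn ℝ Set.univ f) (hant : Antitone f) (hfc : Continuous f)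
    (m : ℕ) (x : ℝ) : Tendsto (fun j => gP f m j x) atTop (𝓝 (gT f m x)) := by
  have hm : (0:ℝ) ≤ (m:ℝ) := Nat.cast_nonneg m
  rcases le_or_gt (m:ℝ) x with h | h
  · have heq : ∀ j, gP f m j x = f (m:ℝ) := by
      intro j
      rw [gP_eval_right m j (by rw [gs_K]; exact h), gs_K]
    rw [gT_eq_right m h]
    simp only [heq]
    exact tendsto_const_nhds
  · rcases lt_or_ge x (-(m:ℝ)) with h2 | h2
    · have heq : ∀ j, gP f m j x = f (-(m:ℝ)) + gσL f m j * (x + m) := by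
        intro j
        rw [gP_eval_left m j (by rw [gs_zero]; linarith), gs_zero]
        ring_nf
      rw [gT_eq_left m h2.le]
      simp only [heq]
      exact tendsto_const_nhds.add ((gσL_tendsto hf hant m).mul_const (x + (m:ℝ)))
    · rw [gT_eq_mid m h2 h.le]
      have t1 : Tendsto (fun j => x + gδ j) atTop (𝓝 x) := by
        simpa using tendsto_const_nhds.add gδ_tendsto
      have t2 : Tendsto (fun j => x - gδ j) atTop (𝓝 x) := by
        simpa using tendsto_const_nhds.sub gδ_tendsto
      refine tendsto_of_tendsto_of_tendsto_of_le_of_le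
        ((hfc.tendsto x).comp t1) ((hfc.tendsto x).comp t2) ?_ ?_
      · intro j
        exact (gP_mid_bounds hf hant m j h2 h).1
      · intro j
        exact (gP_mid_bounds hf hant m j h2 h).2.1

lemma gP_bound (hf : ConvexOn ℝ Set.univ f) (hant : Antitone f) (m j : ℕ) (x : ℝ) :
    |gP f m j x| ≤ (|f (-(m:ℝ))| + |f (m:ℝ)|) + |gσL f m 0| * (|x| + m) := by
  have hm : (0:ℝ) ≤ (m:ℝ) := Nat.cast_nonneg m
  have hterm : (0:ℝ) ≤ |gσL f m 0| * (|x| + m) := by positivity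
  rcases le_or_gt (m:ℝ) x with h | h
  · rw [gP_eval_right m j (by rw [gs_K]; exact h), gs_K]
    have := abs_nonneg (f (-(m:ℝ)))
    linarith [le_refl |f (m:ℝ)|]
  · rcases lt_or_ge x (-(m:ℝ)) with h2 | h2
    · have heval : gP f m j x = f (-(m:ℝ)) + gσL f m j * (x + m) := by
        rw [gP_eval_left m j (by rw [gs_zero]; linarith), gs_zero]
        ring_nf
      rw [heval]
      have hσj : |gσL f m j| ≤ |gσL f m 0| := by
        rw [abs_of_nonpos (gσL_nonpos hant m j), abs_of_nonpos (gσL_nonpos hant m 0)]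
        have := gσL_mono hf m (Nat.zero_le j)
        simpa using this
      have hxm : |x + (m:ℝ)| ≤ |x| + m := by
        calc |x + (m:ℝ)| ≤ |x| + |(m:ℝ)| := abs_add_le x m
        _ = |x| + m := by rw [abs_of_nonneg hm]
      calc |f (-(m:ℝ)) + gσL f m j * (x + m)|
          ≤ |f (-(m:ℝ))| + |gσL f m j * (x + m)| := abs_add_le _ _
        _ = |f (-(m:ℝ))| + |gσL f m j| * |x + m| := by rw [abs_mul]
        _ ≤ |f (-(m:ℝ))| + |gσL f m 0| * (|x| + m) := by
            have : |gσL f m j| * |x + (m:ℝ)| ≤ |gσL f m 0| * (|x| + m) :=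
              mul_le_mul hσj hxm (abs_nonneg _) (abs_nonneg _)
            linarith
        _ ≤ (|f (-(m:ℝ))| + |f (m:ℝ)|) + |gσL f m 0| * (|x| + m) := by
            have := abs_nonneg (f (m:ℝ)); linarith
    · obtain ⟨_, _, hlo, hup⟩ := gP_mid_bounds hf hant m j h2 h
      rw [abs_le]
      constructor
      · have := neg_abs_le (f (m:ℝ)); have := abs_nonneg (f (-(m:ℝ))); linarith
      · have := le_abs_self (f (-(m:ℝ))); have := abs_nonneg (f (m:ℝ)); linarith

lemma gP_continuous (m j : ℕ) : Continuous (gP f m j) := by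
  apply Continuous.add continuous_const
  apply continuous_finset_sum
  intro i _
  exact continuous_const.mul ((continuous_const.sub continuous_id).max continuous_const)

section Integrals

variable {η χ : Measure ℝ} [IsFiniteMeasure η] [IsFiniteMeasure χ]

lemma integrable_block (hη : Integrable (fun x : ℝ => x) η) (c : ℝ) :
    Integrable (fun x => max (c - x) 0) η := ((integrable_const c).sub hη).pos_part

lemma gP_integrable (hη : Integrable (fun x : ℝ => x) η) (m j : ℕ) :
    Integrable (gP f m j) η := by
  apply Integrable.add (integrable_const _)
  apply integrable_finset_sum
  intro i _
  exact (integrable_block hη (gs m j i)).const_mul _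

lemma gP_integral (hη : Integrable (fun x : ℝ => x) η) (m j : ℕ) :
    ∫ x, gP f m j x ∂η = (η Set.univ).toReal * f (gs m j (gK m j))
      + ∑ i ∈ Finset.range (gK m j + 1), ga f m j i * put η (gs m j i) := by
  simp only [gP]
  rw [integral_add (integrable_const _) (integrable_finset_sum _ fun i _ =>
    (integrable_block hη (gs m j i)).const_mul _)]
  rw [integral_const, smul_eq_mul]
  congr 1
  rw [integral_finset_sum _ fun i _ => (integrable_block hη (gs m j i)).const_mul _]
  refine Finset.sum_congr rfl fun i _ => ?_
  rw [integral_const_mul]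
  rfl

lemma gP_int_le (hf : ConvexOn ℝ Set.univ f) (hant : Antitone f)
    (hη : Integrable (fun x : ℝ => x) η) (hχ : Integrable (fun x : ℝ => x) χ)
    (hmass : η Set.univ = χ Set.univ) (hput : ∀ x, put η x ≤ put χ x) (m j : ℕ) :
    ∫ x, gP f m j x ∂η ≤ ∫ x, gP f m j x ∂χ := by
  rw [gP_integral hη m j, gP_integral hχ m j, hmass]
  apply add_le_add le_rfl
  apply Finset.sum_le_sum
  intro i hi
  simp only [Finset.mem_range] at hi
  exact mul_le_mul_of_nonneg_left (hput _) (ga_nonneg hf hant m j (by omega))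

lemma gT_int_le (hf : ConvexOn ℝ Set.univ f) (hant : Antitone f)
    (hη : Integrable (fun x : ℝ => x) η) (hχ : Integrable (fun x : ℝ => x) χ)
    (hmass : η Set.univ = χ Set.univ) (hput : ∀ x, put η x ≤ put χ x) (m : ℕ) :
    ∫ x, gT f m x ∂η ≤ ∫ x, gT f m x ∂χ := by
  have hfc : Continuous f := by
    rw [← continuousOn_univ]
    exact hf.continuousOn isOpen_univ
  set bound : ℝ → ℝ :=
    fun x => (|f (-(m:ℝ))| + |f (m:ℝ)|) + |gσL f m 0| * (|x| + m) with hbdef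
  have hboundInt : ∀ (μ : Measure ℝ) [IsFiniteMeasure μ], Integrable (fun x : ℝ => x) μ →
      Integrable bound μ := by
    intro μ _ hμ
    apply Integrable.add (integrable_const _)
    exact (hμ.abs.add (integrable_const _)).const_mul _
  have key : ∀ (μ : Measure ℝ) [IsFiniteMeasure μ], Integrable (fun x : ℝ => x) μ →
      Tendsto (fun j => ∫ x, gP f m j x ∂μ) atTop (𝓝 (∫ x, gT f m x ∂μ)) := by
    intro μ _ hμ
    refine tendsto_integral_of_dominated_convergence bound
      (fun j => (gP_continuous m j).aestronglyMeasurable) (hboundInt μ hμ)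
      (fun j => ae_of_all _ fun x => ?_) (ae_of_all _ fun x => gP_tendsto_gT hf hant hfc m x)
    simpa [hbdef, Real.norm_eq_abs] using gP_bound hf hant m j x
  exact le_of_tendsto_of_tendsto' (key η hη) (key χ hχ)
    (fun j => gP_int_le hf hant hη hχ hmass hput m j)

end Integrals

end DCOaux

open DCOaux Topology in
theorem decConvOrder_iff_put_le (η χ : Measure ℝ)
    [IsFiniteMeasure η] [IsFiniteMeasure χ]
    (hη : Integrable (fun x : ℝ => x) η) (hχ : Integrable (fun x : ℝ => x) χ)
    (hmass : η Set.univ = χ Set.univ) :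
    DecConvOrder η χ ↔ ∀ x : ℝ, put η x ≤ put χ x := by
  constructor
  · intro h x
    have hconv : ConvexOn ℝ Set.univ (fun t : ℝ => max (x - t) 0) := by
      have h1 : ConvexOn ℝ Set.univ (fun t : ℝ => x - t) := by
        refine ⟨convex_univ, fun a _ b _ p q hp hq hpq => ?_⟩
        simp only [smul_eq_mul]
        apply le_of_eq
        linear_combination (-x) * hpq
      have h2 : ConvexOn ℝ Set.univ (fun _ : ℝ => (0:ℝ)) := convexOn_const 0 convex_univ
      simpa [Pi.sup_def] using h1.sup h2
    have hant : Antitone (fun t : ℝ => max (x - t) 0) := fun t t' htt' =>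
      max_le_max (by linarith) le_rfl
    exact h _ hconv hant (integrable_block hη x) (integrable_block hχ x)
  · intro hput f hconv hant hfη hfχ
    have hfc : Continuous f := by
      rw [← continuousOn_univ]
      exact hconv.continuousOn isOpen_univ
    have key : ∀ (μ : Measure ℝ) [IsFiniteMeasure μ], Integrable (fun x : ℝ => x) μ →
        Integrable f μ →
        Tendsto (fun m => ∫ x, gT f m x ∂μ) atTop (𝓝 (∫ x, f x ∂μ)) := by
      intro μ _ hμ hfμ
      refine tendsto_integral_of_dominated_convergence (fun x => |f x| + |f 0|)
        (fun m => (gT_continuous hfc m).aestronglyMeasurable)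
        (hfμ.abs.add (integrable_const _))
        (fun m => ae_of_all _ fun x => ?_) (ae_of_all _ fun x => gT_tendsto f x)
      simpa [Real.norm_eq_abs] using gT_bound hconv hant m x
    exact le_of_tendsto_of_tendsto' (key η hη hfη) (key χ hχ hfχ)
      (fun m => gT_int_le hconv hant hη hχ hmass hput m)
end
end

section
/- Let π = μ(dx) π_x(dy) be a supermartingale coupling between probability measures μ, ν on ℝ with finite first moments, and let α ∈ (0,1). Define π_x^α as the push-forward of π_x under y ↦ αy + (1−α)x, and π^α := μ(dx) π_x^α(dy). Then π^α is a supermartingale coupling between μ and its second marginal ν^α, and AW₁(π^α, π) ≤ (1−α)(∫ |x| μ(dx) + ∫ |y| ν(dy)). -/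
open MeasureTheory ProbabilityTheory Filter

noncomputable section

/-- Adapted Wasserstein-1 distance between two couplings given by their first
marginals and disintegration kernels. -/
def AW1 (μ : Measure ℝ) (κ : Kernel ℝ ℝ) (μ' : Measure ℝ) (κ' : Kernel ℝ ℝ) : ℝ :=
  sInf ((fun γ : Measure (ℝ × ℝ) =>
    ∫ p, (|p.1 - p.2| + W1 (κ p.1) (κ' p.2)) ∂γ) '' Couplings μ μ')

lemma W1_nonneg (μ ν : Measure ℝ) : 0 ≤ W1 μ ν := by
  apply Real.sInf_nonneg
  rintro c ⟨π, -, rfl⟩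
  exact integral_nonneg fun p => abs_nonneg _

lemma W1_bddBelow (μ ν : Measure ℝ) :
    BddBelow ((fun π : Measure (ℝ × ℝ) => ∫ p, |p.1 - p.2| ∂π) '' Couplings μ ν) := by
  refine ⟨0, ?_⟩
  rintro c ⟨π, -, rfl⟩
  exact integral_nonneg fun p => abs_nonneg _

lemma W1_affine (ρ : Measure ℝ) [IsProbabilityMeasure ρ] (hρ : Integrable (fun y : ℝ => y) ρ)
    (α x : ℝ) (hα : α ∈ Set.Ioo (0 : ℝ) 1) :
    W1 (ρ.map (fun y => α * y + (1 - α) * x)) ρ = (1 - α) * ∫ y, |x - y| ∂ρ := by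
  obtain ⟨hα0, hα1⟩ := hα
  set T : ℝ → ℝ := fun y => α * y + (1 - α) * x with hTdef
  have hT : Measurable T := by fun_prop
  have hm : Measurable fun u : ℝ => |u - x| := by measurability
  have habs : Integrable (fun y : ℝ => |x - y|) ρ := ((integrable_const x).sub hρ).abs
  have habs' : Integrable (fun y : ℝ => |y - x|) ρ := (hρ.sub (integrable_const x)).abs
  -- the monotone coupling
  set γ₁ : Measure (ℝ × ℝ) := ρ.map (fun y => (T y, y)) with hγ₁def
  have hpair : Measurable fun y : ℝ => (T y, y) := hT.prodMk measurable_id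
  have hmem : γ₁ ∈ Couplings (ρ.map T) ρ := by
    constructor
    · rw [hγ₁def, Measure.map_map measurable_fst hpair]; rfl
    · rw [hγ₁def, Measure.map_map measurable_snd hpair]
      rw [show (Prod.snd ∘ fun y : ℝ => (T y, y)) = id from rfl, Measure.map_id]
  have hcost : (∫ p : ℝ × ℝ, |p.1 - p.2| ∂γ₁) = (1 - α) * ∫ y, |x - y| ∂ρ := by
    rw [hγ₁def, integral_map hpair.aemeasurable
      (by fun_prop : Measurable fun p : ℝ × ℝ => |p.1 - p.2|).aestronglyMeasurable]
    rw [← integral_const_mul]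
    apply integral_congr_ae
    filter_upwards with y
    have hTy : T y - y = (1 - α) * (x - y) := by simp only [hTdef]; ring
    show |T y - y| = (1 - α) * |x - y|
    rw [hTy, abs_mul, abs_of_pos (by linarith : (0:ℝ) < 1 - α)]
  apply le_antisymm
  · rw [← hcost]
    exact csInf_le (W1_bddBelow _ _) ⟨γ₁, hmem, rfl⟩
  · refine le_csInf ⟨_, ⟨γ₁, hmem, rfl⟩⟩ ?_
    rintro c ⟨γ₀, ⟨h1, h2⟩, rfl⟩
    haveI : IsProbabilityMeasure γ₀ := by
      constructor
      have h0 : γ₀ Set.univ = (γ₀.map Prod.snd) Set.univ := by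
        rw [Measure.map_apply measurable_snd MeasurableSet.univ]; rfl
      rw [h0, h2, measure_univ]
    have hi2 : Integrable (fun p : ℝ × ℝ => |p.2 - x|) γ₀ := by
      have h' : Integrable (fun v : ℝ => |v - x|) (γ₀.map Prod.snd) := by
        rw [h2]; exact habs'
      exact (integrable_map_measure hm.aestronglyMeasurable
        measurable_snd.aemeasurable).mp h'
    have hi1 : Integrable (fun p : ℝ × ℝ => |p.1 - x|) γ₀ := by
      have h' : Integrable (fun u : ℝ => |u - x|) (γ₀.map Prod.fst) := by
        rw [h1]
        rw [integrable_map_measure hm.aestronglyMeasurable hT.aemeasurable]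
        have hc : ((fun u : ℝ => |u - x|) ∘ T) = fun y => α * |y - x| := by
          funext y
          simp only [Function.comp, hTdef]
          rw [show α * y + (1 - α) * x - x = α * (y - x) by ring, abs_mul,
            abs_of_pos hα0]
        rw [hc]
        exact habs'.const_mul α
      exact (integrable_map_measure hm.aestronglyMeasurable
        measurable_fst.aemeasurable).mp h'
    have hcint : Integrable (fun p : ℝ × ℝ => |p.1 - p.2|) γ₀ := by
      apply (hi1.add hi2).mono'
        (by fun_prop : Measurable fun p : ℝ × ℝ => |p.1 - p.2|).aestronglyMeasurable
      filter_upwards with p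
      rw [Real.norm_eq_abs, abs_abs]
      calc |p.1 - p.2| ≤ |p.1 - x| + |x - p.2| := abs_sub_le _ _ _
        _ = |p.1 - x| + |p.2 - x| := by rw [abs_sub_comm x p.2]
    have key : (∫ p : ℝ × ℝ, (|p.2 - x| - |p.1 - x|) ∂γ₀) ≤ ∫ p : ℝ × ℝ, |p.1 - p.2| ∂γ₀ := by
      apply integral_mono (hi2.sub hi1) hcint
      intro p
      have h3 := abs_sub_abs_le_abs_sub (p.2 - x) (p.1 - x)
      simp only [sub_sub_sub_cancel_right] at h3
      calc |p.2 - x| - |p.1 - x| ≤ |p.2 - p.1| := h3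
        _ = |p.1 - p.2| := abs_sub_comm _ _
    have e2 : (∫ p : ℝ × ℝ, |p.2 - x| ∂γ₀) = ∫ y, |y - x| ∂ρ := by
      rw [← h2]
      exact (integral_map measurable_snd.aemeasurable hm.aestronglyMeasurable).symm
    have e1 : (∫ p : ℝ × ℝ, |p.1 - x| ∂γ₀) = α * ∫ y, |y - x| ∂ρ := by
      have e1a : (∫ p : ℝ × ℝ, |p.1 - x| ∂γ₀) = ∫ u, |u - x| ∂(γ₀.map Prod.fst) :=
        (integral_map measurable_fst.aemeasurable hm.aestronglyMeasurable).symm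
      rw [e1a, h1, integral_map hT.aemeasurable hm.aestronglyMeasurable,
        ← integral_const_mul]
      apply integral_congr_ae
      filter_upwards with y
      show |T y - x| = α * |y - x|
      rw [show T y - x = α * (y - x) by simp only [hTdef]; ring, abs_mul, abs_of_pos hα0]
    rw [integral_sub hi2 hi1, e1, e2] at key
    have exy : (∫ y, |x - y| ∂ρ) = ∫ y, |y - x| ∂ρ := by
      apply integral_congr_ae; filter_upwards with y; rw [abs_sub_comm]
    rw [exy]
    linarith

theorem affine_contraction (μ : Measure ℝ) [IsProbabilityMeasure μ]
    (hμ : Integrable (fun x : ℝ => x) μ)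
    (κ κ' : Kernel ℝ ℝ) [IsMarkovKernel κ] [IsMarkovKernel κ']
    (hκint : ∀ x, Integrable (fun y : ℝ => y) (κ x))
    (hsup : ∀ᵐ x ∂μ, ∫ y, y ∂(κ x) ≤ x)
    (α : ℝ) (hα : α ∈ Set.Ioo (0 : ℝ) 1)
    (hκ' : ∀ x : ℝ, κ' x = (κ x).map (fun y => α * y + (1 - α) * x)) :
    (∀ᵐ x ∂μ, ∫ y, y ∂(κ' x) ≤ x) ∧
      AW1 μ κ' μ κ ≤
        (1 - α) * ((∫ x, |x| ∂μ) + ∫ y, |y| ∂(μ.bind (fun x => κ x))) := by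
  obtain ⟨hα0, hα1⟩ := hα
  have h1α : (0:ℝ) < 1 - α := by linarith
  have hint_x : ∀ x : ℝ, Integrable (fun y : ℝ => |x - y|) (κ x) :=
    fun x => ((integrable_const x).sub (hκint x)).abs
  constructor
  · -- supermartingale property of κ'
    filter_upwards [hsup] with x hx
    rw [hκ' x]
    have hTm : Measurable fun y : ℝ => α * y + (1 - α) * x := by fun_prop
    have e : (∫ y, y ∂((κ x).map (fun y => α * y + (1 - α) * x)))
        = ∫ y, (α * y + (1 - α) * x) ∂κ x :=
      integral_map (f := fun y : ℝ => y) hTm.aemeasurable aestronglyMeasurable_id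
    rw [e, integral_add ((hκint x).const_mul α) (integrable_const _), integral_const_mul,
      integral_const, probReal_univ, one_smul]
    nlinarith
  · -- AW1 bound
    set ν := μ.bind (fun x => κ x) with hν
    have hg_sm : StronglyMeasurable fun x : ℝ => ∫ y, |x - y| ∂κ x :=
      StronglyMeasurable.integral_kernel_prod_right'
        (by fun_prop : Measurable fun p : ℝ × ℝ => |p.1 - p.2|).stronglyMeasurable
    have hh_sm : StronglyMeasurable fun x : ℝ => ∫ y, |y| ∂κ x :=
      StronglyMeasurable.integral_kernel_prod_right'
        (by fun_prop : Measurable fun p : ℝ × ℝ => |p.2|).stronglyMeasurable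
    have hdm : Measurable fun x : ℝ => (x, x) := measurable_id.prodMk measurable_id
    set γd : Measure (ℝ × ℝ) := μ.map (fun x => (x, x)) with hγd
    have hγd_mem : γd ∈ Couplings μ μ := by
      constructor
      · rw [hγd, Measure.map_map measurable_fst hdm,
          show (Prod.fst ∘ fun x : ℝ => (x, x)) = id from rfl, Measure.map_id]
      · rw [hγd, Measure.map_map measurable_snd hdm,
          show (Prod.snd ∘ fun x : ℝ => (x, x)) = id from rfl, Measure.map_id]
    set G : ℝ × ℝ → ℝ := fun p => |p.1 - p.2| + (1 - α) * ∫ y, |p.2 - y| ∂κ p.2 with hG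
    have hG_sm : StronglyMeasurable G := by
      apply StronglyMeasurable.add
      · exact (by fun_prop : Measurable fun p : ℝ × ℝ => |p.1 - p.2|).stronglyMeasurable
      · exact stronglyMeasurable_const.mul (hg_sm.comp_measurable measurable_snd)
    have hFG : (fun p : ℝ × ℝ => |p.1 - p.2| + W1 (κ' p.1) (κ p.2)) =ᵐ[γd] G := by
      have hD : MeasurableSet {p : ℝ × ℝ | p.1 = p.2} :=
        measurableSet_eq_fun measurable_fst measurable_snd
      have hDfull : γd {p : ℝ × ℝ | p.1 = p.2}ᶜ = 0 := by
        rw [hγd, Measure.map_apply hdm hD.compl,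
          show ((fun x : ℝ => (x, x)) ⁻¹' {p : ℝ × ℝ | p.1 = p.2}ᶜ) = ∅ by ext x; simp,
          measure_empty]
      refine ae_iff.2 (measure_mono_null ?_ hDfull)
      intro p hp
      simp only [Set.mem_setOf_eq, Set.mem_compl_iff]
      intro hpd
      apply hp
      have hpe : p.1 = p.2 := hpd
      show |p.1 - p.2| + W1 (κ' p.1) (κ p.2) = |p.1 - p.2| + (1 - α) * ∫ y, |p.2 - y| ∂κ p.2
      rw [hpe, hκ' p.2, W1_affine (κ p.2) (hκint p.2) α p.2 ⟨hα0, hα1⟩]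
    have hcost_eq : (∫ p : ℝ × ℝ, (|p.1 - p.2| + W1 (κ' p.1) (κ p.2)) ∂γd)
        = (1 - α) * ∫ x, (∫ y, |x - y| ∂κ x) ∂μ := by
      rw [integral_congr_ae hFG, hγd,
        integral_map hdm.aemeasurable hG_sm.aestronglyMeasurable, ← integral_const_mul]
      apply integral_congr_ae
      filter_upwards with x
      show |x - x| + (1 - α) * ∫ y, |x - y| ∂κ x = (1 - α) * ∫ y, |x - y| ∂κ x
      rw [sub_self, abs_zero, zero_add]
    have hAW : AW1 μ κ' μ κ ≤ ∫ p : ℝ × ℝ, (|p.1 - p.2| + W1 (κ' p.1) (κ p.2)) ∂γd := by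
      apply csInf_le
      · refine ⟨0, ?_⟩
        rintro c ⟨γ', -, rfl⟩
        exact integral_nonneg fun p => add_nonneg (abs_nonneg _) (W1_nonneg _ _)
      · exact ⟨γd, hγd_mem, rfl⟩
    rw [hcost_eq] at hAW
    refine le_trans hAW ?_
    by_cases hgi : Integrable (fun x : ℝ => ∫ y, |x - y| ∂κ x) μ
    swap
    · rw [integral_undef hgi, mul_zero]
      apply mul_nonneg (le_of_lt h1α)
      exact add_nonneg (integral_nonneg fun x => abs_nonneg _)
        (integral_nonneg fun y => abs_nonneg _)
    · have hub : ∀ x : ℝ, (∫ y, |x - y| ∂κ x) ≤ |x| + ∫ y, |y| ∂κ x := by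
        intro x
        have h' : (∫ y, |x - y| ∂κ x) ≤ ∫ y, (|x| + |y|) ∂κ x := by
          apply integral_mono (hint_x x) ((integrable_const _).add (hκint x).abs)
          intro y
          exact abs_sub x y
        rwa [integral_add (integrable_const _) (hκint x).abs, integral_const, probReal_univ,
          one_smul] at h'
      have hhint : Integrable (fun x : ℝ => ∫ y, |y| ∂κ x) μ := by
        apply Integrable.mono' (hμ.abs.add hgi) hh_sm.aestronglyMeasurable
        filter_upwards with x
        rw [Real.norm_eq_abs, abs_of_nonneg (integral_nonneg fun y => abs_nonneg _)]
        have h' : (∫ y, |y| ∂κ x) ≤ ∫ y, (|x| + |x - y|) ∂κ x := by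
          apply integral_mono (hκint x).abs ((integrable_const _).add (hint_x x))
          intro y
          calc |y| = |x - (x - y)| := by ring_nf
            _ ≤ |x| + |x - y| := abs_sub x (x - y)
        rwa [integral_add (integrable_const _) (hint_x x), integral_const, probReal_univ,
          one_smul] at h'
      have hlin : (∫⁻ y, ENNReal.ofReal |y| ∂ν) = ∫⁻ x, ENNReal.ofReal (∫ y, |y| ∂κ x) ∂μ := by
        have hmo : Measurable fun y : ℝ => ENNReal.ofReal |y| :=
          ENNReal.measurable_ofReal.comp measurable_abs
        have hb : (∫⁻ y, ENNReal.ofReal |y| ∂(μ.bind fun x => κ x))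
            = ∫⁻ x, ∫⁻ y, ENNReal.ofReal |y| ∂κ x ∂μ :=
          Measure.lintegral_bind (Kernel.measurable κ).aemeasurable hmo.aemeasurable
        rw [hν, hb]
        apply lintegral_congr
        intro x
        exact (ofReal_integral_eq_lintegral_ofReal (hκint x).abs
          (Filter.Eventually.of_forall fun y => abs_nonneg y)).symm
      have hbind_eq : (∫ y, |y| ∂ν) = ∫ x, (∫ y, |y| ∂κ x) ∂μ := by
        rw [integral_eq_lintegral_of_nonneg_ae (Filter.Eventually.of_forall fun y => abs_nonneg y)
            measurable_abs.aestronglyMeasurable,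
          integral_eq_lintegral_of_nonneg_ae
            (Filter.Eventually.of_forall fun x => integral_nonneg fun y => abs_nonneg _)
            hh_sm.aestronglyMeasurable,
          hlin]
      rw [hbind_eq]
      apply mul_le_mul_of_nonneg_left _ (le_of_lt h1α)
      calc (∫ x, (∫ y, |x - y| ∂κ x) ∂μ) ≤ ∫ x, (|x| + ∫ y, |y| ∂κ x) ∂μ :=
            integral_mono hgi (hμ.abs.add hhint) hub
        _ = (∫ x, |x| ∂μ) + ∫ x, (∫ y, |y| ∂κ x) ∂μ := integral_add hμ.abs hhint
end
end

section
/- Let μ^k, ν^k, μ, ν be probability measures on ℝ with finite first moments such that W₁(μ^k, μ) → 0 and W₁(ν^k, ν) → 0. Let μ^k ∨_cd ν^k denote the measure whose put function is P_{μ^k} ∨ P_{ν^k} (pointwise maximum). Then W₁(μ^k ∨_cd ν^k, μ ∨_cd ν) → 0. -/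
open MeasureTheory ProbabilityTheory Filter Set

noncomputable section

namespace W1proof

lemma prod_mem_couplings (α β : Measure ℝ) [IsProbabilityMeasure α] [IsProbabilityMeasure β] :
    α.prod β ∈ Couplings α β := by
  constructor
  · simp
  · simp

lemma couplings_nonempty (α β : Measure ℝ) [IsProbabilityMeasure α] [IsProbabilityMeasure β] :
    (Couplings α β).Nonempty := ⟨_, prod_mem_couplings α β⟩

lemma W1_nonneg (α β : Measure ℝ) [IsProbabilityMeasure α] [IsProbabilityMeasure β] :
    0 ≤ W1 α β :=
  le_csInf ((couplings_nonempty α β).image _)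
    (by rintro c ⟨π, hπ, rfl⟩; exact integral_nonneg fun p => abs_nonneg _)

lemma integrable_fst_coupling {α β : Measure ℝ} {π : Measure (ℝ × ℝ)}
    (hπ : π ∈ Couplings α β) (h : Integrable (fun x : ℝ => x) α) :
    Integrable (fun p : ℝ × ℝ => p.1) π := by
  rw [← hπ.1] at h
  exact (integrable_map_measure h.aestronglyMeasurable measurable_fst.aemeasurable).mp h

lemma integrable_snd_coupling {α β : Measure ℝ} {π : Measure (ℝ × ℝ)}
    (hπ : π ∈ Couplings α β) (h : Integrable (fun x : ℝ => x) β) :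
    Integrable (fun p : ℝ × ℝ => p.2) π := by
  rw [← hπ.2] at h
  exact (integrable_map_measure h.aestronglyMeasurable measurable_snd.aemeasurable).mp h

lemma isProbabilityMeasure_coupling {α β : Measure ℝ} {π : Measure (ℝ × ℝ)}
    (hπ : π ∈ Couplings α β) [IsProbabilityMeasure α] : IsProbabilityMeasure π := by
  constructor
  have h : π.map Prod.fst Set.univ = 1 := by rw [hπ.1]; exact measure_univ
  rwa [Measure.map_apply measurable_fst MeasurableSet.univ, preimage_univ] at h

lemma abs_le_of_lip {f : ℝ → ℝ} (hf : ∀ a b : ℝ, |f a - f b| ≤ |a - b|) (a : ℝ) :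
    |f a| ≤ |f 0| + |a| := by
  have h := hf a 0
  calc |f a| = |f a - f 0 + f 0| := by ring_nf
    _ ≤ |f a - f 0| + |f 0| := abs_add_le _ _
    _ ≤ |f 0| + |a| := by rw [sub_zero] at h; linarith

lemma abs_integral_sub_le_W1 (α β : Measure ℝ) [IsProbabilityMeasure α] [IsProbabilityMeasure β]
    (hα : Integrable (fun x : ℝ => x) α) (hβ : Integrable (fun x : ℝ => x) β)
    (f : ℝ → ℝ) (hf : ∀ a b : ℝ, |f a - f b| ≤ |a - b|) (hfc : Continuous f) :
    |(∫ x, f x ∂α) - ∫ x, f x ∂β| ≤ W1 α β := by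
  refine le_csInf ((couplings_nonempty α β).image _) ?_
  rintro c ⟨π, hπ, rfl⟩
  haveI : IsProbabilityMeasure π := isProbabilityMeasure_coupling hπ
  have h1 : Integrable (fun p : ℝ × ℝ => p.1) π := integrable_fst_coupling hπ hα
  have h2 : Integrable (fun p : ℝ × ℝ => p.2) π := integrable_snd_coupling hπ hβ
  have hf1 : Integrable (fun p : ℝ × ℝ => f p.1) π := by
    refine Integrable.mono' (g := fun p : ℝ × ℝ => |f 0| + |p.1|)
      (integrable_const _ |>.add h1.abs)
      (hfc.comp continuous_fst).aestronglyMeasurable ?_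
    exact Filter.Eventually.of_forall fun p => by
      simpa only [Real.norm_eq_abs] using abs_le_of_lip hf p.1
  have hf2 : Integrable (fun p : ℝ × ℝ => f p.2) π := by
    refine Integrable.mono' (g := fun p : ℝ × ℝ => |f 0| + |p.2|)
      (integrable_const _ |>.add h2.abs)
      (hfc.comp continuous_snd).aestronglyMeasurable ?_
    exact Filter.Eventually.of_forall fun p => by
      simpa only [Real.norm_eq_abs] using abs_le_of_lip hf p.2
  have e1 : ∫ x, f x ∂α = ∫ p : ℝ × ℝ, f p.1 ∂π := by
    rw [← hπ.1, integral_map measurable_fst.aemeasurable hfc.aestronglyMeasurable]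
  have e2 : ∫ x, f x ∂β = ∫ p : ℝ × ℝ, f p.2 ∂π := by
    rw [← hπ.2, integral_map measurable_snd.aemeasurable hfc.aestronglyMeasurable]
  calc |(∫ x, f x ∂α) - ∫ x, f x ∂β| = |∫ p : ℝ × ℝ, (f p.1 - f p.2) ∂π| := by
        rw [e1, e2, integral_sub hf1 hf2]
    _ ≤ ∫ p : ℝ × ℝ, |f p.1 - f p.2| ∂π := by
        simpa only [Real.norm_eq_abs] using
          norm_integral_le_integral_norm (μ := π) (fun p : ℝ × ℝ => f p.1 - f p.2)
    _ ≤ ∫ p : ℝ × ℝ, |p.1 - p.2| ∂π :=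
        integral_mono (hf1.sub hf2).abs (h1.sub h2).abs fun p => hf p.1 p.2

-- batch 2 appended to b1 content when testing
def R (η : Measure ℝ) (x : ℝ) : ℝ := ∫ t, max (t - x) 0 ∂η

lemma integrable_put_integrand (α : Measure ℝ) [IsProbabilityMeasure α]
    (hα : Integrable (fun x : ℝ => x) α) (x : ℝ) :
    Integrable (fun t => max (x - t) 0) α := by
  refine Integrable.mono' (g := fun t => |x| + |t|) (integrable_const _ |>.add hα.abs)
    ((continuous_const.sub continuous_id).max continuous_const).aestronglyMeasurable ?_
  refine Filter.Eventually.of_forall fun t => ?_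
  rw [Real.norm_eq_abs, abs_of_nonneg (le_max_right _ _)]
  rcases le_or_gt (x - t) 0 with h | h
  · rw [max_eq_right h]; positivity
  · rw [max_eq_left h.le]
    calc x - t ≤ |x - t| := le_abs_self _
      _ ≤ |x| + |t| := abs_sub _ _

lemma integrable_R_integrand (α : Measure ℝ) [IsProbabilityMeasure α]
    (hα : Integrable (fun x : ℝ => x) α) (x : ℝ) :
    Integrable (fun t => max (t - x) 0) α := by
  refine Integrable.mono' (g := fun t => |x| + |t|) (integrable_const _ |>.add hα.abs)
    ((continuous_id.sub continuous_const).max continuous_const).aestronglyMeasurable ?_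
  refine Filter.Eventually.of_forall fun t => ?_
  rw [Real.norm_eq_abs, abs_of_nonneg (le_max_right _ _)]
  rcases le_or_gt (t - x) 0 with h | h
  · rw [max_eq_right h]; positivity
  · rw [max_eq_left h.le]
    calc t - x ≤ |t - x| := le_abs_self _
      _ ≤ |t| + |x| := abs_sub _ _
      _ = |x| + |t| := by ring

lemma put_nonneg (α : Measure ℝ) (x : ℝ) : 0 ≤ put α x :=
  integral_nonneg fun t => le_max_right _ _

lemma R_nonneg (α : Measure ℝ) (x : ℝ) : 0 ≤ R α x :=
  integral_nonneg fun t => le_max_right _ _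

lemma put_mono (α : Measure ℝ) [IsProbabilityMeasure α]
    (hα : Integrable (fun x : ℝ => x) α) {s t : ℝ} (hst : s ≤ t) : put α s ≤ put α t :=
  integral_mono (integrable_put_integrand α hα s) (integrable_put_integrand α hα t)
    fun u => max_le_max (by linarith) le_rfl

lemma bary_eq (α : Measure ℝ) [IsProbabilityMeasure α]
    (hα : Integrable (fun x : ℝ => x) α) (x : ℝ) :
    ∫ t, t ∂α = x - put α x + R α x := by
  have h : ∀ t : ℝ, t = x - max (x - t) 0 + max (t - x) 0 := by
    intro t
    rcases le_or_gt t x with h | h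
    · rw [max_eq_left (by linarith), max_eq_right (by linarith)]; ring
    · rw [max_eq_right (by linarith), max_eq_left (by linarith)]; ring
  calc ∫ t, t ∂α = ∫ t, (x - max (x - t) 0 + max (t - x) 0) ∂α := by
        congr 1; ext t; exact h t
    _ = (∫ t, (x - max (x - t) 0) ∂α) + ∫ t, max (t - x) 0 ∂α := by
        exact integral_add ((integrable_const x).sub (integrable_put_integrand α hα x))
          (integrable_R_integrand α hα x)
    _ = x - put α x + R α x := by
        rw [integral_sub (integrable_const x) (integrable_put_integrand α hα x)]
        simp [put, R]

lemma tendsto_R_atTop (α : Measure ℝ) [IsProbabilityMeasure α]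
    (hα : Integrable (fun x : ℝ => x) α) :
    Tendsto (fun x => R α x) atTop (nhds 0) := by
  have h0 : (0 : ℝ) = ∫ t, (0 : ℝ) ∂α := by simp
  rw [h0]
  refine tendsto_integral_filter_of_dominated_convergence (fun t => |t|) ?_ ?_ hα.abs ?_
  · exact Filter.Eventually.of_forall fun x =>
      ((continuous_id.sub continuous_const).max continuous_const).aestronglyMeasurable
  · filter_upwards [Filter.eventually_ge_atTop (0 : ℝ)] with x hx
    refine Filter.Eventually.of_forall fun t => ?_
    rw [Real.norm_eq_abs, abs_of_nonneg (le_max_right _ _)]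
    rcases le_or_gt (t - x) 0 with h | h
    · rw [max_eq_right h]; positivity
    · rw [max_eq_left h.le]
      calc t - x ≤ t - 0 := by linarith
        _ ≤ |t| := by simpa using le_abs_self t
  · refine Filter.Eventually.of_forall fun t => ?_
    have : ∀ᶠ x in atTop, max (t - x) 0 = 0 := by
      filter_upwards [Filter.eventually_ge_atTop t] with x hx
      exact max_eq_right (by linarith)
    exact Tendsto.congr' (this.mono fun x hx => hx.symm) tendsto_const_nhds

lemma tendsto_put_atBot (α : Measure ℝ) [IsProbabilityMeasure α]
    (hα : Integrable (fun x : ℝ => x) α) :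
    Tendsto (fun x => put α x) atBot (nhds 0) := by
  have h0 : (0 : ℝ) = ∫ t, (0 : ℝ) ∂α := by simp
  rw [h0]
  refine tendsto_integral_filter_of_dominated_convergence (fun t => |t|) ?_ ?_ hα.abs ?_
  · exact Filter.Eventually.of_forall fun x =>
      ((continuous_const.sub continuous_id).max continuous_const).aestronglyMeasurable
  · filter_upwards [Filter.eventually_le_atBot (0 : ℝ)] with x hx
    refine Filter.Eventually.of_forall fun t => ?_
    rw [Real.norm_eq_abs, abs_of_nonneg (le_max_right _ _)]
    rcases le_or_gt (x - t) 0 with h | h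
    · rw [max_eq_right h]; positivity
    · rw [max_eq_left h.le]
      calc x - t ≤ 0 - t := by linarith
        _ ≤ |t| := by simpa using neg_le_abs t
  · refine Filter.Eventually.of_forall fun t => ?_
    have : ∀ᶠ x in atBot, max (x - t) 0 = 0 := by
      filter_upwards [Filter.eventually_le_atBot t] with x hx
      exact max_eq_right (by linarith)
    exact Tendsto.congr' (this.mono fun x hx => hx.symm) tendsto_const_nhds

lemma abs_put_sub_put_le_W1 (α β : Measure ℝ) [IsProbabilityMeasure α] [IsProbabilityMeasure β]
    (hα : Integrable (fun x : ℝ => x) α) (hβ : Integrable (fun x : ℝ => x) β) (x : ℝ) :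
    |put α x - put β x| ≤ W1 α β := by
  refine abs_integral_sub_le_W1 α β hα hβ (fun t => max (x - t) 0) (fun a b => ?_)
    ((continuous_const.sub continuous_id).max continuous_const)
  calc |max (x - a) 0 - max (x - b) 0| ≤ max |x - a - (x - b)| |(0 : ℝ) - 0| :=
        abs_max_sub_max_le_max _ _ _ _
    _ ≤ |a - b| := by
        rw [sub_zero, abs_zero]
        refine max_le (le_of_eq ?_) (abs_nonneg _)
        rw [show x - a - (x - b) = -(a - b) by ring, abs_neg]

lemma abs_bary_sub_bary_le_W1 (α β : Measure ℝ) [IsProbabilityMeasure α] [IsProbabilityMeasure β]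
    (hα : Integrable (fun x : ℝ => x) α) (hβ : Integrable (fun x : ℝ => x) β) :
    |(∫ t, t ∂α) - ∫ t, t ∂β| ≤ W1 α β := by
  refine abs_integral_sub_le_W1 α β hα hβ (fun t => t) (fun a b => le_rfl) continuous_id
def quant (α : Measure ℝ) (u : ℝ) : ℝ := sInf {x : ℝ | u ≤ cdf α x}

section Quant

variable (α : Measure ℝ) [IsProbabilityMeasure α]

lemma quant_set_nonempty {u : ℝ} (hu : u < 1) : {x : ℝ | u ≤ cdf α x}.Nonempty := by
  have h := (tendsto_cdf_atTop α).eventually (eventually_gt_nhds hu)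
  obtain ⟨x, hx⟩ := h.exists
  exact ⟨x, hx.le⟩

lemma quant_set_bddBelow {u : ℝ} (hu : 0 < u) : BddBelow {x : ℝ | u ≤ cdf α x} := by
  have h := (tendsto_cdf_atBot α).eventually (eventually_lt_nhds hu)
  obtain ⟨x0, hx0⟩ := h.exists
  refine ⟨x0, fun y hy => ?_⟩
  by_contra hxy
  push_neg at hxy
  exact absurd (hy.trans (monotone_cdf α hxy.le)) (not_le.mpr hx0)

lemma quant_le_iff {u x : ℝ} (hu : u ∈ Set.Ioo (0:ℝ) 1) :
    quant α u ≤ x ↔ u ≤ cdf α x := by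
  constructor
  · intro h
    have hw : ∀ w, x < w → u ≤ cdf α w := by
      intro w hw
      obtain ⟨y, hy, hyw⟩ := exists_lt_of_csInf_lt (quant_set_nonempty α hu.2) (h.trans_lt hw)
      exact hy.trans (monotone_cdf α hyw.le)
    have hc : ContinuousWithinAt (cdf α) (Set.Ioi x) x :=
      ((cdf α).right_continuous x).mono Set.Ioi_subset_Ici_self
    refine ge_of_tendsto hc ?_
    filter_upwards [self_mem_nhdsWithin] with w hwx
    exact hw w hwx
  · intro h
    exact csInf_le (quant_set_bddBelow α hu.1) h

lemma monotoneOn_quant : MonotoneOn (quant α) (Set.Ioo (0:ℝ) 1) := by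
  intro u hu v hv huv
  refine le_csInf (quant_set_nonempty α hv.2) fun x hx => ?_
  exact csInf_le (quant_set_bddBelow α hu.1) (huv.trans hx)

lemma aemeasurable_quant :
    AEMeasurable (quant α) (volume.restrict (Set.Ioo (0:ℝ) 1)) :=
  aemeasurable_restrict_of_monotoneOn measurableSet_Ioo (monotoneOn_quant α)

lemma volume_Iic_inter_Ioo {c : ℝ} (hc0 : 0 ≤ c) (hc1 : c ≤ 1) :
    volume (Set.Iic c ∩ Set.Ioo (0:ℝ) 1) = ENNReal.ofReal c := by
  refine le_antisymm ?_ ?_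
  · have h1 : Set.Iic c ∩ Set.Ioo (0:ℝ) 1 ⊆ Set.Ioc 0 c := fun u hu => ⟨hu.2.1, hu.1⟩
    calc volume (Set.Iic c ∩ Set.Ioo (0:ℝ) 1) ≤ volume (Set.Ioc 0 c) := measure_mono h1
      _ = ENNReal.ofReal c := by rw [Real.volume_Ioc, sub_zero]
  · have h2 : Set.Ioo 0 c ⊆ Set.Iic c ∩ Set.Ioo (0:ℝ) 1 :=
      fun u hu => ⟨hu.2.le, hu.1, lt_of_lt_of_le hu.2 hc1⟩
    calc ENNReal.ofReal c = volume (Set.Ioo 0 c) := by rw [Real.volume_Ioo, sub_zero]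
      _ ≤ volume (Set.Iic c ∩ Set.Ioo (0:ℝ) 1) := measure_mono h2

lemma map_quant : Measure.map (quant α) (volume.restrict (Set.Ioo (0:ℝ) 1)) = α := by
  have hq := aemeasurable_quant α
  haveI : IsProbabilityMeasure (Measure.map (quant α) (volume.restrict (Set.Ioo (0:ℝ) 1))) := by
    constructor
    rw [Measure.map_apply_of_aemeasurable hq MeasurableSet.univ, Set.preimage_univ,
      Measure.restrict_apply MeasurableSet.univ, Set.univ_inter, Real.volume_Ioo]
    norm_num
  refine Measure.ext_of_Iic _ _ fun x => ?_
  rw [Measure.map_apply_of_aemeasurable hq measurableSet_Iic,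
    Measure.restrict_apply' measurableSet_Ioo]
  have hset : quant α ⁻¹' Set.Iic x ∩ Set.Ioo (0:ℝ) 1
      = Set.Iic (cdf α x) ∩ Set.Ioo (0:ℝ) 1 := by
    ext u
    simp only [Set.mem_inter_iff, Set.mem_preimage, Set.mem_Iic, and_congr_left_iff]
    intro hu
    exact quant_le_iff α hu
  rw [hset, volume_Iic_inter_Ioo (cdf_nonneg α x) (cdf_le_one α x), ofReal_cdf]

lemma integrable_quant (hα : Integrable (fun x : ℝ => x) α) :
    Integrable (quant α) (volume.restrict (Set.Ioo (0:ℝ) 1)) := by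
  have h := hα
  rw [← map_quant α] at h
  exact (integrable_map_measure h.aestronglyMeasurable (aemeasurable_quant α)).mp h

end Quant
section Cost

lemma key_indicator_x (a b x : ℝ) :
    ENNReal.ofReal |(if a ≤ x then (1:ℝ) else 0) - if b ≤ x then 1 else 0|
      = (Set.Ico (min a b) (max a b)).indicator (fun _ => (1:ENNReal)) x := by
  rcases le_total a b with hab | hab
  · rw [min_eq_left hab, max_eq_right hab]
    by_cases ha : a ≤ x <;> by_cases hb : b ≤ x
    · rw [if_pos ha, if_pos hb, Set.indicator_of_notMem (fun h => absurd h.2 (not_lt.mpr hb))]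
      simp
    · rw [if_pos ha, if_neg hb, Set.indicator_of_mem (Set.mem_Ico.mpr ⟨ha, not_le.mp hb⟩)]
      simp
    · exact absurd (hab.trans hb) ha
    · rw [if_neg ha, if_neg hb, Set.indicator_of_notMem (fun h => ha h.1)]
      simp
  · rw [min_eq_right hab, max_eq_left hab]
    by_cases ha : a ≤ x <;> by_cases hb : b ≤ x
    · rw [if_pos ha, if_pos hb, Set.indicator_of_notMem (fun h => absurd h.2 (not_lt.mpr ha))]
      simp
    · exact absurd (hab.trans ha) hb
    · rw [if_neg ha, if_pos hb, Set.indicator_of_mem (Set.mem_Ico.mpr ⟨hb, not_le.mp ha⟩)]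
      simp
    · rw [if_neg ha, if_neg hb, Set.indicator_of_notMem (fun h => hb h.1)]
      simp

lemma key_indicator_u (a b u : ℝ) :
    ENNReal.ofReal |(if u ≤ a then (1:ℝ) else 0) - if u ≤ b then 1 else 0|
      = (Set.Ioc (min a b) (max a b)).indicator (fun _ => (1:ENNReal)) u := by
  rcases le_total a b with hab | hab
  · rw [min_eq_left hab, max_eq_right hab]
    by_cases ha : u ≤ a <;> by_cases hb : u ≤ b
    · rw [if_pos ha, if_pos hb, Set.indicator_of_notMem (fun h => absurd h.1 (not_lt.mpr ha))]
      simp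
    · exact absurd (ha.trans hab) hb
    · rw [if_neg ha, if_pos hb, Set.indicator_of_mem (Set.mem_Ioc.mpr ⟨not_le.mp ha, hb⟩)]
      simp
    · rw [if_neg ha, if_neg hb, Set.indicator_of_notMem (fun h => hb h.2)]
      simp
  · rw [min_eq_right hab, max_eq_left hab]
    by_cases ha : u ≤ a <;> by_cases hb : u ≤ b
    · rw [if_pos ha, if_pos hb, Set.indicator_of_notMem (fun h => absurd h.1 (not_lt.mpr hb))]
      simp
    · rw [if_pos ha, if_neg hb, Set.indicator_of_mem (Set.mem_Ioc.mpr ⟨not_le.mp hb, ha⟩)]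
      simp
    · exact absurd (hb.trans hab) ha
    · rw [if_neg ha, if_neg hb, Set.indicator_of_notMem (fun h => ha h.2)]
      simp

lemma volume_Ioc_inter_Ioo {c d : ℝ} (hc : 0 ≤ c) (hcd : c ≤ d) (hd : d ≤ 1) :
    volume (Set.Ioc c d ∩ Set.Ioo (0:ℝ) 1) = ENNReal.ofReal (d - c) := by
  refine le_antisymm ?_ ?_
  · have h1 : Set.Ioc c d ∩ Set.Ioo (0:ℝ) 1 ⊆ Set.Ioc c d := Set.inter_subset_left
    calc volume (Set.Ioc c d ∩ Set.Ioo (0:ℝ) 1) ≤ volume (Set.Ioc c d) := measure_mono h1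
      _ = ENNReal.ofReal (d - c) := Real.volume_Ioc
  · have h2 : Set.Ioo c d ⊆ Set.Ioc c d ∩ Set.Ioo (0:ℝ) 1 :=
      fun u hu => ⟨⟨hu.1, hu.2.le⟩, lt_of_le_of_lt hc hu.1, lt_of_lt_of_le hu.2 hd⟩
    calc ENNReal.ofReal (d - c) = volume (Set.Ioo c d) := Real.volume_Ioo.symm
      _ ≤ volume (Set.Ioc c d ∩ Set.Ioo (0:ℝ) 1) := measure_mono h2

variable (α β : Measure ℝ) [IsProbabilityMeasure α] [IsProbabilityMeasure β]

lemma lintegral_quant_eq :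
    (∫⁻ u in Set.Ioo (0:ℝ) 1, ENNReal.ofReal |quant α u - quant β u|)
      = ∫⁻ x, ENNReal.ofReal |cdf α x - cdf β x| := by
  set μ01 := volume.restrict (Set.Ioo (0:ℝ) 1) with hμ01
  set F : ℝ → ℝ → ENNReal := fun u x =>
    ENNReal.ofReal |(if quant α u ≤ x then (1:ℝ) else 0) - if quant β u ≤ x then 1 else 0|
    with hF
  have hqa : AEMeasurable (fun p : ℝ × ℝ => quant α p.1) (μ01.prod volume) :=
    (aemeasurable_quant α).comp_quasiMeasurePreserving Measure.quasiMeasurePreserving_fst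
  have hqb : AEMeasurable (fun p : ℝ × ℝ => quant β p.1) (μ01.prod volume) :=
    (aemeasurable_quant β).comp_quasiMeasurePreserving Measure.quasiMeasurePreserving_fst
  have houter : Measurable (fun q : ℝ × ℝ => if q.1 ≤ q.2 then (1:ℝ) else 0) :=
    Measurable.ite (measurableSet_le measurable_fst measurable_snd) measurable_const
      measurable_const
  have hind1 : AEMeasurable (fun p : ℝ × ℝ => if quant α p.1 ≤ p.2 then (1:ℝ) else 0)
      (μ01.prod volume) :=
    houter.comp_aemeasurable (hqa.prodMk measurable_snd.aemeasurable)
  have hind2 : AEMeasurable (fun p : ℝ × ℝ => if quant β p.1 ≤ p.2 then (1:ℝ) else 0)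
      (μ01.prod volume) :=
    houter.comp_aemeasurable (hqb.prodMk measurable_snd.aemeasurable)
  have hFmeas : AEMeasurable (Function.uncurry F) (μ01.prod volume) := by
    have : Function.uncurry F = fun p : ℝ × ℝ =>
        ENNReal.ofReal |(if quant α p.1 ≤ p.2 then (1:ℝ) else 0)
          - if quant β p.1 ≤ p.2 then 1 else 0| := rfl
    rw [this]
    exact (continuous_abs.measurable.comp_aemeasurable (hind1.sub hind2)).ennreal_ofReal
  have hinner_x : ∀ u : ℝ, (∫⁻ x, F u x) = ENNReal.ofReal |quant α u - quant β u| := by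
    intro u
    have : (fun x => F u x) = (Set.Ico (min (quant α u) (quant β u))
        (max (quant α u) (quant β u))).indicator (fun _ => (1:ENNReal)) := by
      ext x; exact key_indicator_x _ _ x
    rw [this, lintegral_indicator measurableSet_Ico, setLIntegral_one, Real.volume_Ico]
    congr 1
    rcases le_total (quant α u) (quant β u) with h | h
    · rw [max_eq_right h, min_eq_left h, abs_sub_comm, abs_of_nonneg (by linarith)]
    · rw [max_eq_left h, min_eq_right h, abs_of_nonneg (by linarith)]
  have hinner_u : ∀ x : ℝ, (∫⁻ u, F u x ∂μ01) = ENNReal.ofReal |cdf α x - cdf β x| := by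
    intro x
    have hae : (fun u => F u x) =ᵐ[μ01]
        fun u => ENNReal.ofReal |(if u ≤ cdf α x then (1:ℝ) else 0)
          - if u ≤ cdf β x then 1 else 0| := by
      rw [hμ01]
      filter_upwards [ae_restrict_mem measurableSet_Ioo] with u hu
      simp only [hF]
      have h1 := quant_le_iff α (x := x) hu
      have h2 := quant_le_iff β (x := x) hu
      rw [if_congr h1 rfl rfl, if_congr h2 rfl rfl]
    rw [lintegral_congr_ae hae]
    have heq : (fun u => ENNReal.ofReal |(if u ≤ cdf α x then (1:ℝ) else 0)
        - if u ≤ cdf β x then 1 else 0|)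
        = (Set.Ioc (min (cdf α x) (cdf β x)) (max (cdf α x) (cdf β x))).indicator
          (fun _ => (1:ENNReal)) := by
      ext u; exact key_indicator_u _ _ u
    rw [heq, hμ01, lintegral_indicator measurableSet_Ioc, Measure.restrict_restrict
      measurableSet_Ioc, setLIntegral_one,
      volume_Ioc_inter_Ioo (le_min (cdf_nonneg α x) (cdf_nonneg β x)) (min_le_max)
      (max_le (cdf_le_one α x) (cdf_le_one β x))]
    congr 1
    rcases le_total (cdf α x) (cdf β x) with h | h
    · rw [max_eq_right h, min_eq_left h, abs_sub_comm, abs_of_nonneg (by linarith)]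
    · rw [max_eq_left h, min_eq_right h, abs_of_nonneg (by linarith)]
  calc (∫⁻ u in Set.Ioo (0:ℝ) 1, ENNReal.ofReal |quant α u - quant β u|)
      = ∫⁻ u, ∫⁻ x, F u x ∂volume ∂μ01 := by
        rw [hμ01]; exact lintegral_congr fun u => (hinner_x u).symm
    _ = ∫⁻ x, ∫⁻ u, F u x ∂μ01 ∂volume := lintegral_lintegral_swap hFmeas
    _ = ∫⁻ x, ENNReal.ofReal |cdf α x - cdf β x| := lintegral_congr fun x => hinner_u x

lemma W1_le_cdf_lintegral (hα : Integrable (fun x : ℝ => x) α)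
    (hβ : Integrable (fun x : ℝ => x) β) :
    W1 α β ≤ (∫⁻ x, ENNReal.ofReal |cdf α x - cdf β x|).toReal := by
  set μ01 := volume.restrict (Set.Ioo (0:ℝ) 1) with hμ01
  set π := Measure.map (fun u => (quant α u, quant β u)) μ01 with hπdef
  have hqpair : AEMeasurable (fun u => (quant α u, quant β u)) μ01 :=
    (aemeasurable_quant α).prodMk (aemeasurable_quant β)
  have hπ : π ∈ Couplings α β := by
    constructor
    · rw [hπdef, AEMeasurable.map_map_of_aemeasurable measurable_fst.aemeasurable hqpair]
      exact map_quant α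
    · rw [hπdef, AEMeasurable.map_map_of_aemeasurable measurable_snd.aemeasurable hqpair]
      exact map_quant β
  have hcost : (∫ p : ℝ × ℝ, |p.1 - p.2| ∂π)
      = ∫ u in Set.Ioo (0:ℝ) 1, |quant α u - quant β u| := by
    rw [hπdef, integral_map hqpair (Continuous.aestronglyMeasurable (by continuity))]
  have hsub : AEMeasurable (fun u => |quant α u - quant β u|) μ01 :=
    continuous_abs.measurable.comp_aemeasurable
      ((aemeasurable_quant α).sub (aemeasurable_quant β))
  have hlint : (∫ u in Set.Ioo (0:ℝ) 1, |quant α u - quant β u|)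
      = (∫⁻ u in Set.Ioo (0:ℝ) 1, ENNReal.ofReal |quant α u - quant β u|).toReal := by
    rw [integral_eq_lintegral_of_nonneg_ae (Filter.Eventually.of_forall fun u => abs_nonneg _)
      hsub.aestronglyMeasurable]
  have h1 : W1 α β ≤ ∫ p : ℝ × ℝ, |p.1 - p.2| ∂π := by
    refine csInf_le ⟨0, ?_⟩ ⟨π, hπ, rfl⟩
    rintro c ⟨π', hπ', rfl⟩
    exact integral_nonneg fun p => abs_nonneg _
  rw [hcost, hlint, lintegral_quant_eq α β] at h1
  exact h1

end Cost
section Tails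

variable (α : Measure ℝ) [IsProbabilityMeasure α]

lemma ofReal_one_sub_cdf (x : ℝ) :
    ENNReal.ofReal (1 - cdf α x) = α (Set.Ioi x) := by
  have hc : α (Set.Ioi x) = 1 - α (Set.Iic x) := by
    rw [← Set.compl_Iic, measure_compl measurableSet_Iic (measure_ne_top α _), measure_univ]
  rw [hc, ← ofReal_cdf α x, ENNReal.ofReal_sub _ (cdf_nonneg α x), ENNReal.ofReal_one]

lemma ofReal_cdf_eq (x : ℝ) : ENNReal.ofReal (cdf α x) = α (Set.Iic x) := ofReal_cdf α x

lemma lintegral_tail_right (hα : Integrable (fun x : ℝ => x) α) (A : ℝ) :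
    (∫⁻ x in Set.Ioi A, ENNReal.ofReal (1 - cdf α x)) = ENNReal.ofReal (R α A) := by
  set F : ℝ → ℝ → ENNReal := fun x t => if x < t then 1 else 0 with hF
  have hFmeas : AEMeasurable (Function.uncurry F)
      ((volume.restrict (Set.Ioi A)).prod α) := by
    have : Function.uncurry F = fun p : ℝ × ℝ => if p.1 < p.2 then (1:ENNReal) else 0 := rfl
    rw [this]
    exact (Measurable.ite (measurableSet_lt measurable_fst measurable_snd) measurable_const
      measurable_const).aemeasurable
  have hinner_t : ∀ x : ℝ, (∫⁻ t, F x t ∂α) = α (Set.Ioi x) := by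
    intro x
    have : (fun t => F x t) = (Set.Ioi x).indicator (fun _ => (1:ENNReal)) := by
      ext t
      by_cases h : x < t <;> simp [hF, Set.indicator, Set.mem_Ioi, Set.mem_Iio, h]
    rw [this, lintegral_indicator measurableSet_Ioi, setLIntegral_one]
  have hinner_x : ∀ t : ℝ, (∫⁻ x in Set.Ioi A, F x t) = ENNReal.ofReal (max (t - A) 0) := by
    intro t
    have : (fun x => F x t) = (Set.Iio t).indicator (fun _ => (1:ENNReal)) := by
      ext x
      by_cases h : x < t <;> simp [hF, Set.indicator, Set.mem_Ioi, Set.mem_Iio, h]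
    rw [this, lintegral_indicator measurableSet_Iio, Measure.restrict_restrict measurableSet_Iio,
      setLIntegral_one]
    have : Set.Iio t ∩ Set.Ioi A = Set.Ioo A t := by
      ext x; simp [Set.mem_Ioo, and_comm]
    rw [this, Real.volume_Ioo]
    rcases le_or_gt t A with h | h
    · rw [ENNReal.ofReal_of_nonpos (by linarith), max_eq_right (by linarith),
        ENNReal.ofReal_zero]
    · rw [max_eq_left (by linarith)]
  calc (∫⁻ x in Set.Ioi A, ENNReal.ofReal (1 - cdf α x))
      = ∫⁻ x in Set.Ioi A, ∫⁻ t, F x t ∂α := by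
        refine lintegral_congr fun x => ?_
        rw [hinner_t x, ofReal_one_sub_cdf]
    _ = ∫⁻ t, ∫⁻ x in Set.Ioi A, F x t ∂volume ∂α := lintegral_lintegral_swap hFmeas
    _ = ∫⁻ t, ENNReal.ofReal (max (t - A) 0) ∂α := lintegral_congr fun t => hinner_x t
    _ = ENNReal.ofReal (R α A) := by
        rw [← ofReal_integral_eq_lintegral_ofReal (integrable_R_integrand α hα A)
          (Filter.Eventually.of_forall fun t => le_max_right _ _)]
        rfl

lemma lintegral_tail_left (hα : Integrable (fun x : ℝ => x) α) (B : ℝ) :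
    (∫⁻ x in Set.Iic B, ENNReal.ofReal (cdf α x)) = ENNReal.ofReal (put α B) := by
  set F : ℝ → ℝ → ENNReal := fun x t => if t ≤ x then 1 else 0 with hF
  have hFmeas : AEMeasurable (Function.uncurry F)
      ((volume.restrict (Set.Iic B)).prod α) := by
    have : Function.uncurry F = fun p : ℝ × ℝ => if p.2 ≤ p.1 then (1:ENNReal) else 0 := rfl
    rw [this]
    exact (Measurable.ite (measurableSet_le measurable_snd measurable_fst) measurable_const
      measurable_const).aemeasurable
  have hinner_t : ∀ x : ℝ, (∫⁻ t, F x t ∂α) = α (Set.Iic x) := by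
    intro x
    have : (fun t => F x t) = (Set.Iic x).indicator (fun _ => (1:ENNReal)) := by
      ext t
      by_cases h : t ≤ x <;> simp [hF, Set.indicator, Set.mem_Iic, Set.mem_Ici, h]
    rw [this, lintegral_indicator measurableSet_Iic, setLIntegral_one]
  have hinner_x : ∀ t : ℝ, (∫⁻ x in Set.Iic B, F x t) = ENNReal.ofReal (max (B - t) 0) := by
    intro t
    have : (fun x => F x t) = (Set.Ici t).indicator (fun _ => (1:ENNReal)) := by
      ext x
      by_cases h : t ≤ x <;> simp [hF, Set.indicator, Set.mem_Iic, Set.mem_Ici, h]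
    rw [this, lintegral_indicator measurableSet_Ici, Measure.restrict_restrict measurableSet_Ici,
      setLIntegral_one]
    have : Set.Ici t ∩ Set.Iic B = Set.Icc t B := by
      ext x; simp [Set.mem_Icc]
    rw [this, Real.volume_Icc]
    rcases le_or_gt t B with h | h
    · rw [max_eq_left (by linarith)]
    · rw [ENNReal.ofReal_of_nonpos (by linarith), max_eq_right (by linarith),
        ENNReal.ofReal_zero]
  calc (∫⁻ x in Set.Iic B, ENNReal.ofReal (cdf α x))
      = ∫⁻ x in Set.Iic B, ∫⁻ t, F x t ∂α := by
        refine lintegral_congr fun x => ?_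
        rw [hinner_t x, ofReal_cdf_eq]
    _ = ∫⁻ t, ∫⁻ x in Set.Iic B, F x t ∂volume ∂α := lintegral_lintegral_swap hFmeas
    _ = ∫⁻ t, ENNReal.ofReal (max (B - t) 0) ∂α := lintegral_congr fun t => hinner_x t
    _ = ENNReal.ofReal (put α B) := by
        rw [← ofReal_integral_eq_lintegral_ofReal (integrable_put_integrand α hα B)
          (Filter.Eventually.of_forall fun t => le_max_right _ _)]
        rfl

lemma lintegral_cdf_Ioc (hα : Integrable (fun x : ℝ => x) α) {s t : ℝ} (hst : s ≤ t) :
    (∫⁻ x in Set.Ioc s t, ENNReal.ofReal (cdf α x)) = ENNReal.ofReal (put α t - put α s) := by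
  set F : ℝ → ℝ → ENNReal := fun x u => if u ≤ x then 1 else 0 with hF
  have hFmeas : AEMeasurable (Function.uncurry F)
      ((volume.restrict (Set.Ioc s t)).prod α) := by
    have : Function.uncurry F = fun p : ℝ × ℝ => if p.2 ≤ p.1 then (1:ENNReal) else 0 := rfl
    rw [this]
    exact (Measurable.ite (measurableSet_le measurable_snd measurable_fst) measurable_const
      measurable_const).aemeasurable
  have hinner_t : ∀ x : ℝ, (∫⁻ u, F x u ∂α) = α (Set.Iic x) := by
    intro x
    have : (fun u => F x u) = (Set.Iic x).indicator (fun _ => (1:ENNReal)) := by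
      ext u
      by_cases h : u ≤ x <;> simp [hF, Set.indicator, Set.mem_Iic, Set.mem_Ici, h]
    rw [this, lintegral_indicator measurableSet_Iic, setLIntegral_one]
  have hinner_x : ∀ u : ℝ,
      (∫⁻ x in Set.Ioc s t, F x u) = ENNReal.ofReal (max (t - u) 0 - max (s - u) 0) := by
    intro u
    have hset : (fun x => F x u) = (Set.Ici u).indicator (fun _ => (1:ENNReal)) := by
      ext x
      by_cases h : u ≤ x <;> simp [hF, Set.indicator, Set.mem_Iic, Set.mem_Ici, h]
    rw [hset, lintegral_indicator measurableSet_Ici, Measure.restrict_restrict measurableSet_Ici,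
      setLIntegral_one]
    rcases le_or_gt u s with h | h
    · have : Set.Ici u ∩ Set.Ioc s t = Set.Ioc s t := by
        refine Set.inter_eq_self_of_subset_right fun x hx => le_trans h (le_of_lt hx.1)
      rw [this, Real.volume_Ioc, max_eq_left (by linarith), max_eq_left (by linarith)]
      congr 1; ring
    · rcases le_or_gt u t with h2 | h2
      · have : Set.Ici u ∩ Set.Ioc s t = Set.Icc u t := by
          ext x
          simp only [Set.mem_inter_iff, Set.mem_Ici, Set.mem_Ioc, Set.mem_Icc]
          constructor
          · rintro ⟨h1, _, h3⟩; exact ⟨h1, h3⟩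
          · rintro ⟨h1, h3⟩; exact ⟨h1, lt_of_lt_of_le h h1, h3⟩
        rw [this, Real.volume_Icc, max_eq_left (by linarith), max_eq_right (by linarith),
          sub_zero]
      · have : Set.Ici u ∩ Set.Ioc s t = ∅ := by
          ext x
          simp only [Set.mem_inter_iff, Set.mem_Ici, Set.mem_Ioc, Set.mem_empty_iff_false,
            iff_false, not_and]
          intro h1 h3
          exact fun h4 => absurd (h1.trans h4) (not_le.mpr h2)
        rw [this, measure_empty, max_eq_right (by linarith), max_eq_right (by linarith),
          sub_zero, ENNReal.ofReal_zero]
  have hintegrand : Integrable (fun u => max (t - u) 0 - max (s - u) 0) α :=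
    (integrable_put_integrand α hα t).sub (integrable_put_integrand α hα s)
  calc (∫⁻ x in Set.Ioc s t, ENNReal.ofReal (cdf α x))
      = ∫⁻ x in Set.Ioc s t, ∫⁻ u, F x u ∂α := by
        refine lintegral_congr fun x => ?_
        rw [hinner_t x, ofReal_cdf_eq]
    _ = ∫⁻ u, ∫⁻ x in Set.Ioc s t, F x u ∂volume ∂α := lintegral_lintegral_swap hFmeas
    _ = ∫⁻ u, ENNReal.ofReal (max (t - u) 0 - max (s - u) 0) ∂α :=
        lintegral_congr fun u => hinner_x u
    _ = ENNReal.ofReal (put α t - put α s) := by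
        rw [← ofReal_integral_eq_lintegral_ofReal hintegrand
          (Filter.Eventually.of_forall fun u => by
            show (0:ℝ) ≤ max (t - u) 0 - max (s - u) 0
            have : max (s - u) 0 ≤ max (t - u) 0 := max_le_max (by linarith) le_rfl
            linarith)]
        rw [integral_sub (integrable_put_integrand α hα t) (integrable_put_integrand α hα s)]
        rfl

lemma integral_cdf_Ioc (hα : Integrable (fun x : ℝ => x) α) {s t : ℝ} (hst : s ≤ t) :
    (∫ x in Set.Ioc s t, cdf α x) = put α t - put α s := by
  rw [integral_eq_lintegral_of_nonneg_ae
    (Filter.Eventually.of_forall fun x => cdf_nonneg α x)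
    ((monotone_cdf α).measurable.aestronglyMeasurable), lintegral_cdf_Ioc α hα hst,
    ENNReal.toReal_ofReal]
  have := put_mono α hα hst
  linarith

end Tails
section Middle

variable (α β : Measure ℝ) [IsProbabilityMeasure α] [IsProbabilityMeasure β]

lemma cdf_integrableOn (s t : ℝ) :
    IntegrableOn (fun x => cdf α x) (Set.Ioc s t) volume := by
  haveI : IsFiniteMeasure (volume.restrict (Set.Ioc s t)) := by
    constructor
    rw [Measure.restrict_apply_univ, Real.volume_Ioc]
    exact ENNReal.ofReal_lt_top
  refine Integrable.mono' (integrable_const 1)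
    ((monotone_cdf α).measurable.aestronglyMeasurable) ?_
  refine Filter.Eventually.of_forall fun x => ?_
  rw [Real.norm_eq_abs, abs_of_nonneg (cdf_nonneg α x)]
  exact cdf_le_one α x

lemma interval_bound (hα : Integrable (fun x : ℝ => x) α) (hβ : Integrable (fun x : ℝ => x) β)
    {δ s t : ℝ} (hδ : 0 ≤ δ) (hst : s < t)
    (hput : ∀ x : ℝ, |put α x - put β x| ≤ δ) :
    (∫⁻ x in Set.Ioc s t, ENNReal.ofReal |cdf α x - cdf β x|)
      ≤ ENNReal.ofReal (2*δ + (t-s) * ((cdf α t - cdf α s) + (cdf β t - cdf β s))) := by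
  set V : ℝ := (cdf α t - cdf α s) + (cdf β t - cdf β s) with hV
  have hts : (0:ℝ) < t - s := by linarith
  have hVnn : 0 ≤ V := by
    have h1 := monotone_cdf α hst.le
    have h2 := monotone_cdf β hst.le
    simp only [hV]; linarith
  have hvolfin : volume (Set.Ioc s t) < ⊤ := by
    rw [Real.volume_Ioc]; exact ENNReal.ofReal_lt_top
  have hI : (∫ y in Set.Ioc s t, (cdf α y - cdf β y))
      = (put α t - put β t) - (put α s - put β s) := by
    rw [integral_sub (cdf_integrableOn α s t) (cdf_integrableOn β s t),
      integral_cdf_Ioc α hα hst.le, integral_cdf_Ioc β hβ hst.le]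
    ring
  have hIabs : |∫ y in Set.Ioc s t, (cdf α y - cdf β y)| ≤ 2*δ := by
    rw [hI]
    calc |(put α t - put β t) - (put α s - put β s)|
        ≤ |put α t - put β t| + |put α s - put β s| := abs_sub _ _
      _ ≤ δ + δ := add_le_add (hput t) (hput s)
      _ = 2*δ := by ring
  set c : ℝ := (2*δ + (t-s)*V)/(t-s) with hc
  have hcnn : 0 ≤ c := div_nonneg (by nlinarith) hts.le
  have hint : IntegrableOn (fun y => cdf α y - cdf β y) (Set.Ioc s t) volume :=
    (cdf_integrableOn α s t).sub (cdf_integrableOn β s t)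
  have hvol : volume.real (Set.Ioc s t) = t - s := by
    rw [Measure.real, Real.volume_Ioc, ENNReal.toReal_ofReal hts.le]
  have key : ∀ x ∈ Set.Ioc s t, |cdf α x - cdf β x| ≤ c := by
    intro x hx
    rw [hc, le_div_iff₀ hts]
    set M : ℝ := 2*δ + (t-s)*V with hM
    have h1 : ∀ y ∈ Set.Ioc s t,
        (fun _ : ℝ => cdf α x - cdf β x) y ≤ (fun y => (cdf α y - cdf β y) + V) y := by
      intro y hy
      have a1 : cdf α x ≤ cdf α t := monotone_cdf α hx.2
      have a2 : cdf α s ≤ cdf α y := monotone_cdf α hy.1.le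
      have b1 : cdf β y ≤ cdf β t := monotone_cdf β hy.2
      have b2 : cdf β s ≤ cdf β x := monotone_cdf β hx.1.le
      simp only [hV]; linarith
    have h2 : ∀ y ∈ Set.Ioc s t,
        (fun y => (cdf α y - cdf β y) - V) y ≤ (fun _ : ℝ => cdf α x - cdf β x) y := by
      intro y hy
      have a1 : cdf α y ≤ cdf α t := monotone_cdf α hy.2
      have a2 : cdf α s ≤ cdf α x := monotone_cdf α hx.1.le
      have b1 : cdf β x ≤ cdf β t := monotone_cdf β hx.2
      have b2 : cdf β s ≤ cdf β y := monotone_cdf β hy.1.le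
      simp only [hV]; linarith
    have hconst : IntegrableOn (fun _ : ℝ => cdf α x - cdf β x) (Set.Ioc s t) volume :=
      integrableOn_const hvolfin.ne
    have hVc : IntegrableOn (fun _ : ℝ => V) (Set.Ioc s t) volume :=
      integrableOn_const hvolfin.ne
    have hg1 : IntegrableOn (fun y => (cdf α y - cdf β y) + V) (Set.Ioc s t) volume :=
      hint.add hVc
    have hg2 : IntegrableOn (fun y => (cdf α y - cdf β y) - V) (Set.Ioc s t) volume :=
      hint.sub hVc
    have hup := setIntegral_mono_on hconst hg1 measurableSet_Ioc h1
    have hdown := setIntegral_mono_on hg2 hconst measurableSet_Ioc h2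
    rw [setIntegral_const, hvol, smul_eq_mul,
      integral_add hint hVc, setIntegral_const, hvol, smul_eq_mul] at hup
    rw [setIntegral_const, hvol, smul_eq_mul,
      integral_sub hint hVc, setIntegral_const, hvol, smul_eq_mul] at hdown
    have habs := abs_le.mp hIabs
    have hup2 : (cdf α x - cdf β x) * (t - s) ≤ M := by
      rw [hM]; nlinarith [habs.2]
    have hdown2 : -((cdf α x - cdf β x) * (t - s)) ≤ M := by
      rw [hM]; nlinarith [habs.1]
    calc |cdf α x - cdf β x| * (t - s) = |(cdf α x - cdf β x) * (t - s)| := by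
          rw [abs_mul, abs_of_pos hts]
      _ ≤ M := abs_le.mpr ⟨by linarith, hup2⟩
  calc (∫⁻ x in Set.Ioc s t, ENNReal.ofReal |cdf α x - cdf β x|)
      ≤ ∫⁻ _ in Set.Ioc s t, ENNReal.ofReal c :=
        setLIntegral_mono measurable_const fun x hx => ENNReal.ofReal_le_ofReal (key x hx)
    _ = ENNReal.ofReal c * volume (Set.Ioc s t) := setLIntegral_const _ _
    _ = ENNReal.ofReal (c * (t-s)) := by
        rw [Real.volume_Ioc, ← ENNReal.ofReal_mul hcnn]
    _ = ENNReal.ofReal (2*δ + (t-s) * V) := by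
        congr 1
        rw [hc]
        field_simp
  
lemma middle_bound (hα : Integrable (fun x : ℝ => x) α) (hβ : Integrable (fun x : ℝ => x) β)
    {δ A : ℝ} {N : ℕ} (hδ : 0 ≤ δ) (hA : 0 < A) (hN : 0 < N)
    (hput : ∀ x : ℝ, |put α x - put β x| ≤ δ) :
    (∫⁻ x in Set.Ioc (-A) A, ENNReal.ofReal |cdf α x - cdf β x|)
      ≤ ENNReal.ofReal (2*δ*N + (2*A/N) * 2) := by
  have hNR : (0:ℝ) < N := Nat.cast_pos.mpr hN
  set L : ℝ := 2*A/N with hL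
  have hLpos : 0 < L := by positivity
  set xs : ℕ → ℝ := fun j => -A + j * L with hxs
  have hx0 : xs 0 = -A := by simp [hxs]
  have hxN : xs N = A := by
    simp only [hxs, hL]
    field_simp
    ring
  have hsucc : ∀ j : ℕ, xs (j+1) = xs j + L := by
    intro j; simp only [hxs]; push_cast; ring
  have hmono : ∀ j : ℕ, xs j < xs (j+1) := fun j => by rw [hsucc j]; linarith
  have hmono' : Monotone xs := monotone_nat_of_le_succ fun j => (hmono j).le
  set V : ℕ → ℝ := fun j => (cdf α (xs (j+1)) - cdf α (xs j))
      + (cdf β (xs (j+1)) - cdf β (xs j)) with hV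
  have claim : ∀ n : ℕ, (∫⁻ x in Set.Ioc (xs 0) (xs n), ENNReal.ofReal |cdf α x - cdf β x|)
      ≤ ENNReal.ofReal (∑ j ∈ Finset.range n, (2*δ + L * V j)) := by
    intro n
    induction n with
    | zero =>
      simp [Set.Ioc_self]
    | succ n ih =>
      have hun : Set.Ioc (xs 0) (xs n) ∪ Set.Ioc (xs n) (xs (n+1)) = Set.Ioc (xs 0) (xs (n+1)) :=
        Set.Ioc_union_Ioc_eq_Ioc (hmono' (Nat.zero_le n)) (hmono n).le
      have hsum : ∀ j ∈ Finset.range n, (0:ℝ) ≤ 2*δ + L * V j := by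
        intro j _
        have v1 := monotone_cdf α (hmono j).le
        have v2 := monotone_cdf β (hmono j).le
        have : 0 ≤ V j := by simp only [hV]; linarith
        nlinarith
      calc (∫⁻ x in Set.Ioc (xs 0) (xs (n+1)), ENNReal.ofReal |cdf α x - cdf β x|)
          = ∫⁻ x in Set.Ioc (xs 0) (xs n) ∪ Set.Ioc (xs n) (xs (n+1)),
              ENNReal.ofReal |cdf α x - cdf β x| := by rw [hun]
        _ ≤ (∫⁻ x in Set.Ioc (xs 0) (xs n), ENNReal.ofReal |cdf α x - cdf β x|)
              + ∫⁻ x in Set.Ioc (xs n) (xs (n+1)), ENNReal.ofReal |cdf α x - cdf β x| :=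
            lintegral_union_le _ _ _
        _ ≤ ENNReal.ofReal (∑ j ∈ Finset.range n, (2*δ + L * V j))
              + ENNReal.ofReal (2*δ + L * V n) := by
            refine add_le_add ih ?_
            have := interval_bound α β hα hβ hδ (hmono n) hput
            have hlen : xs (n+1) - xs n = L := by rw [hsucc n]; ring
            rw [hlen] at this
            exact this
        _ = ENNReal.ofReal (∑ j ∈ Finset.range (n+1), (2*δ + L * V j)) := by
            rw [← ENNReal.ofReal_add (Finset.sum_nonneg hsum) (by
              have v1 := monotone_cdf α (hmono n).le
              have v2 := monotone_cdf β (hmono n).le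
              have : 0 ≤ V n := by simp only [hV]; linarith
              nlinarith), Finset.sum_range_succ]
  have hVsum : ∑ j ∈ Finset.range N, V j
      = (cdf α (xs N) - cdf α (xs 0)) + (cdf β (xs N) - cdf β (xs 0)) := by
    simp only [hV]
    rw [Finset.sum_add_distrib, Finset.sum_range_sub (fun j => cdf α (xs j)),
      Finset.sum_range_sub (fun j => cdf β (xs j))]
  have hVle : ∑ j ∈ Finset.range N, V j ≤ 2 := by
    rw [hVsum]
    have := cdf_le_one α (xs N)
    have := cdf_nonneg α (xs 0)
    have := cdf_le_one β (xs N)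
    have := cdf_nonneg β (xs 0)
    linarith
  have := claim N
  rw [hx0, hxN] at this
  refine this.trans (ENNReal.ofReal_le_ofReal ?_)
  have hexp : ∑ j ∈ Finset.range N, (2*δ + L * V j)
      = 2*δ*N + L * ∑ j ∈ Finset.range N, V j := by
    rw [Finset.sum_add_distrib, Finset.sum_const, Finset.card_range, ← Finset.mul_sum]
    ring
  rw [hexp, hL]
  have : L * ∑ j ∈ Finset.range N, V j ≤ L * 2 := by
    refine mul_le_mul_of_nonneg_left hVle hLpos.le
  rw [hL] at this
  linarith

end Middle
section Total

variable (α β : Measure ℝ) [IsProbabilityMeasure α] [IsProbabilityMeasure β]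

lemma abs_bary_diff_le (hα : Integrable (fun x : ℝ => x) α) (hβ : Integrable (fun x : ℝ => x) β)
    {δ : ℝ} (hput : ∀ x : ℝ, |put α x - put β x| ≤ δ) :
    |(∫ t, t ∂α) - ∫ t, t ∂β| ≤ δ := by
  have hbound : ∀ x : ℝ, |(∫ t, t ∂α) - ∫ t, t ∂β| ≤ δ + (R α x + R β x) := by
    intro x
    rw [bary_eq α hα x, bary_eq β hβ x]
    have h1 := hput x
    have h2 := abs_nonneg (R α x - R β x)
    calc |(x - put α x + R α x) - (x - put β x + R β x)|
        = |(put β x - put α x) + (R α x - R β x)| := by ring_nf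
      _ ≤ |put β x - put α x| + |R α x - R β x| := abs_add_le _ _
      _ ≤ δ + (R α x + R β x) := by
          refine add_le_add (by rwa [abs_sub_comm]) ?_
          have := R_nonneg α x
          have := R_nonneg β x
          rcases abs_cases (R α x - R β x) with ⟨h, _⟩ | ⟨h, _⟩ <;> rw [h] <;> linarith
  have htend : Tendsto (fun x => δ + (R α x + R β x)) atTop (nhds (δ + (0 + 0))) :=
    tendsto_const_nhds.add ((tendsto_R_atTop α hα).add (tendsto_R_atTop β hβ))
  have := ge_of_tendsto htend (Filter.Eventually.of_forall hbound)
  simpa using this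

lemma W1_le_total (hα : Integrable (fun x : ℝ => x) α) (hβ : Integrable (fun x : ℝ => x) β)
    {δ A : ℝ} {N : ℕ} (hδ : 0 ≤ δ) (hA : 0 < A) (hN : 0 < N)
    (hput : ∀ x : ℝ, |put α x - put β x| ≤ δ) :
    W1 α β ≤ (put α (-A) + put β (-A)) + (2*δ*N + (2*A/N)*2) + (R α A + R β A) := by
  have hmid_nn : (0:ℝ) ≤ 2*δ*N + (2*A/N)*2 := by positivity
  have htot_nn : (0:ℝ) ≤ (put α (-A) + put β (-A)) + (2*δ*N + (2*A/N)*2) + (R α A + R β A) := by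
    have := put_nonneg α (-A); have := put_nonneg β (-A)
    have := R_nonneg α A; have := R_nonneg β A
    linarith
  refine (W1_le_cdf_lintegral α β hα hβ).trans ?_
  refine ENNReal.toReal_le_of_le_ofReal htot_nn ?_
  have hmeasg : Measurable (fun x => ENNReal.ofReal |cdf α x - cdf β x|) :=
    (((monotone_cdf α).measurable.sub (monotone_cdf β).measurable).abs).ennreal_ofReal
  -- split the line
  have hsplit1 : (∫⁻ x, ENNReal.ofReal |cdf α x - cdf β x|)
      = (∫⁻ x in Set.Iic A, ENNReal.ofReal |cdf α x - cdf β x|)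
        + ∫⁻ x in Set.Ioi A, ENNReal.ofReal |cdf α x - cdf β x| := by
    rw [← Set.compl_Iic]
    exact (lintegral_add_compl _ measurableSet_Iic).symm
  have hsplit2 : (∫⁻ x in Set.Iic A, ENNReal.ofReal |cdf α x - cdf β x|)
      ≤ (∫⁻ x in Set.Iic (-A), ENNReal.ofReal |cdf α x - cdf β x|)
        + ∫⁻ x in Set.Ioc (-A) A, ENNReal.ofReal |cdf α x - cdf β x| := by
    rw [← Set.Iic_union_Ioc_eq_Iic (by linarith : -A ≤ A)]
    exact lintegral_union_le _ _ _
  -- left tail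
  have hleft : (∫⁻ x in Set.Iic (-A), ENNReal.ofReal |cdf α x - cdf β x|)
      ≤ ENNReal.ofReal (put α (-A) + put β (-A)) := by
    have hptw : ∀ x : ℝ, ENNReal.ofReal |cdf α x - cdf β x|
        ≤ ENNReal.ofReal (cdf α x) + ENNReal.ofReal (cdf β x) := by
      intro x
      rw [← ENNReal.ofReal_add (cdf_nonneg α x) (cdf_nonneg β x)]
      refine ENNReal.ofReal_le_ofReal ?_
      have := cdf_nonneg α x; have := cdf_nonneg β x
      rcases abs_cases (cdf α x - cdf β x) with ⟨h, _⟩ | ⟨h, _⟩ <;> rw [h] <;> linarith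
    calc (∫⁻ x in Set.Iic (-A), ENNReal.ofReal |cdf α x - cdf β x|)
        ≤ ∫⁻ x in Set.Iic (-A), (ENNReal.ofReal (cdf α x) + ENNReal.ofReal (cdf β x)) :=
          lintegral_mono hptw
      _ = (∫⁻ x in Set.Iic (-A), ENNReal.ofReal (cdf α x))
            + ∫⁻ x in Set.Iic (-A), ENNReal.ofReal (cdf β x) :=
          lintegral_add_left ((monotone_cdf α).measurable.ennreal_ofReal) _
      _ = ENNReal.ofReal (put α (-A)) + ENNReal.ofReal (put β (-A)) := by
          rw [lintegral_tail_left α hα, lintegral_tail_left β hβ]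
      _ = ENNReal.ofReal (put α (-A) + put β (-A)) :=
          (ENNReal.ofReal_add (put_nonneg α _) (put_nonneg β _)).symm
  -- right tail
  have hright : (∫⁻ x in Set.Ioi A, ENNReal.ofReal |cdf α x - cdf β x|)
      ≤ ENNReal.ofReal (R α A + R β A) := by
    have hptw : ∀ x : ℝ, ENNReal.ofReal |cdf α x - cdf β x|
        ≤ ENNReal.ofReal (1 - cdf α x) + ENNReal.ofReal (1 - cdf β x) := by
      intro x
      have ha := cdf_le_one α x; have hb := cdf_le_one β x
      rw [← ENNReal.ofReal_add (by linarith) (by linarith)]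
      refine ENNReal.ofReal_le_ofReal ?_
      rcases abs_cases (cdf α x - cdf β x) with ⟨h, _⟩ | ⟨h, _⟩ <;> rw [h] <;>
        [linarith [cdf_nonneg β x]; linarith [cdf_nonneg α x]]
    calc (∫⁻ x in Set.Ioi A, ENNReal.ofReal |cdf α x - cdf β x|)
        ≤ ∫⁻ x in Set.Ioi A, (ENNReal.ofReal (1 - cdf α x) + ENNReal.ofReal (1 - cdf β x)) :=
          lintegral_mono hptw
      _ = (∫⁻ x in Set.Ioi A, ENNReal.ofReal (1 - cdf α x))
            + ∫⁻ x in Set.Ioi A, ENNReal.ofReal (1 - cdf β x) :=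
          lintegral_add_left ((measurable_const.sub (monotone_cdf α).measurable).ennreal_ofReal) _
      _ = ENNReal.ofReal (R α A) + ENNReal.ofReal (R β A) := by
          rw [lintegral_tail_right α hα, lintegral_tail_right β hβ]
      _ = ENNReal.ofReal (R α A + R β A) :=
          (ENNReal.ofReal_add (R_nonneg α _) (R_nonneg β _)).symm
  have hmid := middle_bound α β hα hβ hδ hA hN hput
  calc (∫⁻ x, ENNReal.ofReal |cdf α x - cdf β x|)
      = (∫⁻ x in Set.Iic A, ENNReal.ofReal |cdf α x - cdf β x|)
        + ∫⁻ x in Set.Ioi A, ENNReal.ofReal |cdf α x - cdf β x| := hsplit1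
    _ ≤ ((∫⁻ x in Set.Iic (-A), ENNReal.ofReal |cdf α x - cdf β x|)
        + ∫⁻ x in Set.Ioc (-A) A, ENNReal.ofReal |cdf α x - cdf β x|)
        + ∫⁻ x in Set.Ioi A, ENNReal.ofReal |cdf α x - cdf β x| := add_le_add hsplit2 le_rfl
    _ ≤ (ENNReal.ofReal (put α (-A) + put β (-A)) + ENNReal.ofReal (2*δ*N + (2*A/N)*2))
        + ENNReal.ofReal (R α A + R β A) :=
        add_le_add (add_le_add hleft hmid) hright
    _ = ENNReal.ofReal ((put α (-A) + put β (-A)) + (2*δ*N + (2*A/N)*2) + (R α A + R β A)) := by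
        rw [← ENNReal.ofReal_add (by
            have := put_nonneg α (-A); have := put_nonneg β (-A); linarith) hmid_nn,
          ← ENNReal.ofReal_add (by
            have := put_nonneg α (-A); have := put_nonneg β (-A); linarith) (by
            have := R_nonneg α A; have := R_nonneg β A; linarith)]

end Total
end W1proof
theorem W1_convergence_of_cd_max (μk νk : ℕ → Measure ℝ) (μ ν : Measure ℝ)
    [IsProbabilityMeasure μ] [IsProbabilityMeasure ν]
    (hμk : ∀ k, IsProbabilityMeasure (μk k)) (hνk : ∀ k, IsProbabilityMeasure (νk k))
    (hμint : Integrable (fun x : ℝ => x) μ) (hνint : Integrable (fun x : ℝ => x) ν)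
    (hμkint : ∀ k, Integrable (fun x : ℝ => x) (μk k))
    (hνkint : ∀ k, Integrable (fun x : ℝ => x) (νk k))
    (hμW : Tendsto (fun k => W1 (μk k) μ) atTop (nhds 0))
    (hνW : Tendsto (fun k => W1 (νk k) ν) atTop (nhds 0))
    (σk : ℕ → Measure ℝ) (σ : Measure ℝ)
    (hσk : ∀ k, IsProbabilityMeasure (σk k)) (hσ : IsProbabilityMeasure σ)
    (hσkint : ∀ k, Integrable (fun x : ℝ => x) (σk k))
    (hσint : Integrable (fun x : ℝ => x) σ)
    (hputk : ∀ k, ∀ x : ℝ, put (σk k) x = max (put (μk k) x) (put (νk k) x))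
    (hput : ∀ x : ℝ, put σ x = max (put μ x) (put ν x)) :
    Tendsto (fun k => W1 (σk k) σ) atTop (nhds 0) := by
  have hDb : ∀ k, ∀ x : ℝ, |put (σk k) x - put σ x| ≤ W1 (μk k) μ + W1 (νk k) ν := by
    intro k x
    haveI := hμk k; haveI := hνk k
    have h1 := W1proof.abs_put_sub_put_le_W1 (μk k) μ (hμkint k) hμint x
    have h2 := W1proof.abs_put_sub_put_le_W1 (νk k) ν (hνkint k) hνint x
    have hw1 := W1proof.W1_nonneg (μk k) μ
    have hw2 := W1proof.W1_nonneg (νk k) ν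
    rw [hputk k x, hput x]
    calc |max (put (μk k) x) (put (νk k) x) - max (put μ x) (put ν x)|
        ≤ max |put (μk k) x - put μ x| |put (νk k) x - put ν x| :=
          abs_max_sub_max_le_max _ _ _ _
      _ ≤ W1 (μk k) μ + W1 (νk k) ν := max_le (by linarith) (by linarith)
  set D : ℕ → ℝ := fun k => W1 (μk k) μ + W1 (νk k) ν with hD
  have hDto : Tendsto D atTop (nhds 0) := by
    have := hμW.add hνW
    simpa using this
  have hDnn : ∀ k, 0 ≤ D k := fun k => by
    haveI := hμk k; haveI := hνk k
    exact add_nonneg (W1proof.W1_nonneg _ _) (W1proof.W1_nonneg _ _)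
  rw [Metric.tendsto_atTop]
  intro ε hε
  have hRten : Tendsto (fun A => W1proof.R σ A) atTop (nhds 0) :=
    W1proof.tendsto_R_atTop σ hσint
  have hPten : Tendsto (fun A : ℝ => put σ (-A)) atTop (nhds 0) :=
    (W1proof.tendsto_put_atBot σ hσint).comp tendsto_neg_atTop_atBot
  have hev : ∀ᶠ A in (atTop : Filter ℝ),
      W1proof.R σ A < ε/16 ∧ put σ (-A) < ε/16 ∧ 1 ≤ A := by
    filter_upwards [hRten.eventually (gt_mem_nhds (show (0:ℝ) < ε/16 by positivity)),
      hPten.eventually (gt_mem_nhds (show (0:ℝ) < ε/16 by positivity)),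
      Filter.eventually_ge_atTop (1:ℝ)] with A h1 h2 h3
    exact ⟨h1, h2, h3⟩
  obtain ⟨A, hRA, hPA, hA1⟩ := hev.exists
  have hA : (0:ℝ) < A := by linarith
  obtain ⟨N0, hN0⟩ := exists_nat_ge (16*A/ε)
  set N : ℕ := N0 + 1 with hNdef
  have hNpos : 0 < N := Nat.succ_pos _
  have hNR : (0:ℝ) < N := Nat.cast_pos.mpr hNpos
  have hNge : 16*A/ε ≤ (N:ℝ) := by
    rw [hNdef]
    push_cast
    linarith
  have h16 : 16*A ≤ ε*(N:ℝ) := by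
    rw [div_le_iff₀ hε] at hNge
    linarith
  have hmid2 : (2*A/(N:ℝ))*2 ≤ ε/4 := by
    rw [div_mul_eq_mul_div, div_le_div_iff₀ hNR (by norm_num : (0:ℝ) < 4)]
    linarith
  have hevk : ∀ᶠ k in atTop, D k < (ε/4)/(2*(N:ℝ)+3) :=
    hDto.eventually (gt_mem_nhds (by positivity))
  rw [Filter.eventually_atTop] at hevk
  obtain ⟨K, hK⟩ := hevk
  refine ⟨K, fun k hk => ?_⟩
  haveI := hμk k; haveI := hνk k; haveI := hσk k
  have hDk := hK k hk
  have hDkk : D k = W1 (μk k) μ + W1 (νk k) ν := rfl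
  have hDknn := hDnn k
  have hbary := W1proof.abs_bary_diff_le (σk k) σ (hσkint k) hσint (hDb k)
  have habs := abs_le.mp hbary
  have hRbound : W1proof.R (σk k) A ≤ W1proof.R σ A + 2 * D k := by
    have e1 := W1proof.bary_eq (σk k) (hσkint k) A
    have e2 := W1proof.bary_eq σ hσint A
    have h3 := abs_le.mp (hDb k A)
    rw [hDkk]
    linarith
  have hPbound : put (σk k) (-A) ≤ put σ (-A) + D k := by
    have := abs_le.mp (hDb k (-A))
    rw [hDkk]
    linarith
  have htot := W1proof.W1_le_total (σk k) σ (hσkint k) hσint hDknn hA hNpos (hDb k)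
  have hWnn := W1proof.W1_nonneg (σk k) σ
  rw [Real.dist_eq, sub_zero, abs_of_nonneg hWnn]
  have hDN : D k * (2*(N:ℝ)+3) < ε/4 := by
    have h2N3 : (0:ℝ) < 2*(N:ℝ)+3 := by positivity
    calc D k * (2*(N:ℝ)+3) < ((ε/4)/(2*(N:ℝ)+3)) * (2*(N:ℝ)+3) := by
          exact mul_lt_mul_of_pos_right hDk h2N3
      _ = ε/4 := by field_simp
  calc W1 (σk k) σ
      ≤ (put (σk k) (-A) + put σ (-A)) + (2*(D k)*(N:ℝ) + (2*A/(N:ℝ))*2)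
        + (W1proof.R (σk k) A + W1proof.R σ A) := htot
    _ ≤ (2 * put σ (-A) + D k) + (2*(D k)*(N:ℝ) + ε/4)
        + (2 * W1proof.R σ A + 2 * D k) := by linarith
    _ < ε := by
        have hexp : D k * (2*(N:ℝ)+3) = 2*(D k)*(N:ℝ) + 3*(D k) := by ring
        linarith
end
end

section
/- Let π ∈ Π_S(μ, ν) with μ, ν ∈ P₁(ℝ) and let M ∈ Π(ν, ρ) be any coupling. Define π^k by composing π with M on the second coordinate. Then AW₁(π', π) ≤ ∫_{ℝ²} |z − y| M(dz, dy). -/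
open MeasureTheory ProbabilityTheory Filter

noncomputable section

lemma W1_nonneg_s13 (a b : Measure ℝ) : 0 ≤ W1 a b := by
  apply Real.sInf_nonneg
  rintro x ⟨π, -, rfl⟩
  exact integral_nonneg fun p => abs_nonneg _

lemma W1_le {a b : Measure ℝ} {π : Measure (ℝ × ℝ)} (hπ : π ∈ Couplings a b) :
    W1 a b ≤ ∫ p, |p.1 - p.2| ∂π := by
  refine csInf_le ⟨0, ?_⟩ ⟨π, hπ, rfl⟩
  rintro x ⟨π', -, rfl⟩
  exact integral_nonneg fun p => abs_nonneg _

lemma snd_compProd_eq_bind (μ : Measure ℝ) [SFinite μ] (κ : Kernel ℝ ℝ) [IsSFiniteKernel κ] :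
    (μ ⊗ₘ κ).map Prod.snd = μ.bind (fun x => κ x) := by
  ext s hs
  rw [Measure.map_apply measurable_snd hs, Measure.compProd_apply (measurable_snd hs),
    Measure.bind_apply hs κ.measurable.aemeasurable]
  rfl

theorem AW1_composition_bound (μ ν ρ : Measure ℝ)
    [IsProbabilityMeasure μ] [IsProbabilityMeasure ν] [IsProbabilityMeasure ρ]
    (hμ : Integrable (fun x : ℝ => x) μ) (hν : Integrable (fun x : ℝ => x) ν)
    (hρ : Integrable (fun x : ℝ => x) ρ)
    (κ lam κ' : Kernel ℝ ℝ) [IsMarkovKernel κ] [IsMarkovKernel lam] [IsMarkovKernel κ']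
    (hκν : μ.bind (fun x => κ x) = ν)
    (hsup : ∀ᵐ x ∂μ, ∫ y, y ∂(κ x) ≤ x)
    (hlamρ : ν.bind (fun z => lam z) = ρ)
    (hκ' : ∀ x : ℝ, κ' x = (κ x).bind (fun z => lam z)) :
    AW1 μ κ' μ κ ≤ ∫ z, ∫ y, |z - y| ∂(lam z) ∂ν := by
  set f : ℝ × ℝ → ℝ := fun p => |p.1 - p.2| with hfdef
  have hfm : StronglyMeasurable f := ((measurable_fst.sub measurable_snd).abs).stronglyMeasurable
  set h : ℝ → ℝ := fun z => ∫ y, |z - y| ∂(lam z) with hhdef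
  have hhm : StronglyMeasurable h := hfm.integral_kernel_prod_right'
  have hh0 : ∀ z, 0 ≤ h z := fun z => integral_nonneg fun y => abs_nonneg _
  set g : ℝ → ℝ := fun x => ∫ z, h z ∂(κ x) with hgdef
  -- integrability of f w.r.t. ν ⊗ₘ lam
  have hfst : Integrable (fun p : ℝ × ℝ => p.1) (ν ⊗ₘ lam) := by
    have hmap : (ν ⊗ₘ lam).map Prod.fst = ν := Measure.fst_compProd ν lam
    have := (integrable_map_measure (f := Prod.fst) (g := fun x : ℝ => x)
      (by rw [hmap]; exact measurable_id.aestronglyMeasurable)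
      measurable_fst.aemeasurable).mp (by rw [hmap]; exact hν)
    exact this
  have hsnd : Integrable (fun p : ℝ × ℝ => p.2) (ν ⊗ₘ lam) := by
    have hmap : (ν ⊗ₘ lam).map Prod.snd = ρ := by
      rw [snd_compProd_eq_bind]; exact hlamρ
    have := (integrable_map_measure (f := Prod.snd) (g := fun x : ℝ => x)
      (by rw [hmap]; exact measurable_id.aestronglyMeasurable)
      measurable_snd.aemeasurable).mp (by rw [hmap]; exact hρ)
    exact this
  have hfInt : Integrable f (ν ⊗ₘ lam) := by
    refine (hfst.abs.add hsnd.abs).mono' hfm.aestronglyMeasurable ?_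
    filter_upwards with p
    simp only [hfdef, Real.norm_eq_abs, abs_abs]
    exact (abs_sub _ _)
  have hhInt : Integrable h ν := by
    have := ((Measure.integrable_compProd_iff hfm.aestronglyMeasurable).mp hfInt).2
    refine this.congr ?_
    filter_upwards with z
    simp only [hfdef, Real.norm_eq_abs, abs_abs, hhdef]
  -- transfer h-integral along μ ⊗ₘ κ
  have hsndκ : (μ ⊗ₘ κ).map Prod.snd = ν := by rw [snd_compProd_eq_bind]; exact hκν
  have hHInt : Integrable (fun p : ℝ × ℝ => h p.2) (μ ⊗ₘ κ) := by
    have := (integrable_map_measure (f := Prod.snd) (g := h)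
      (by rw [hsndκ]; exact hhm.aestronglyMeasurable)
      measurable_snd.aemeasurable).mp (by rw [hsndκ]; exact hhInt)
    exact this
  have hνμ : ∫ z, h z ∂ν = ∫ x, g x ∂μ := by
    rw [← hsndκ, integral_map measurable_snd.aemeasurable hhm.aestronglyMeasurable,
      Measure.integral_compProd hHInt]
  have hgInt : Integrable g μ := by
    have := ((Measure.integrable_compProd_iff
      (f := fun p : ℝ × ℝ => h p.2)
      ((hhm.comp_measurable measurable_snd).aestronglyMeasurable)).mp hHInt).2
    refine this.congr ?_
    filter_upwards with x
    simp only [hgdef, Real.norm_eq_abs]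
    congr 1
    exact funext fun z => abs_of_nonneg (hh0 z)
  -- pointwise bound on W1
  have key : ∀ x, W1 (κ' x) (κ x) ≤ g x := by
    intro x
    set P : Measure (ℝ × ℝ) := (κ x) ⊗ₘ lam with hP
    have hΓ : P.map Prod.swap ∈ Couplings (κ' x) (κ x) := by
      constructor
      · rw [Measure.map_map measurable_fst measurable_swap]
        have : (Prod.fst ∘ Prod.swap : ℝ × ℝ → ℝ) = Prod.snd := rfl
        rw [this, hP, snd_compProd_eq_bind, hκ' x]
      · rw [Measure.map_map measurable_snd measurable_swap]
        have : (Prod.snd ∘ Prod.swap : ℝ × ℝ → ℝ) = Prod.fst := rfl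
        rw [this, hP]
        exact Measure.fst_compProd _ _
    refine (W1_le hΓ).trans ?_
    have hswap : ∫ p, |p.1 - p.2| ∂(P.map Prod.swap) = ∫ p, f p ∂P := by
      rw [show (Prod.swap : ℝ × ℝ → ℝ × ℝ) = ⇑((MeasurableEquiv.prodComm : ℝ × ℝ ≃ᵐ ℝ × ℝ)) from rfl,
        integral_map_equiv]
      refine integral_congr_ae (Filter.Eventually.of_forall fun p => ?_)
      simp [f, MeasurableEquiv.prodComm, abs_sub_comm]
    rw [hswap]
    by_cases hPi : Integrable f P
    · rw [Measure.integral_compProd hPi]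
    · rw [integral_undef hPi]
      exact integral_nonneg fun z => hh0 z
  -- diagonal coupling
  have hdiagm : Measurable (fun x : ℝ => (x, x)) := measurable_id.prodMk measurable_id
  have hdiag : MeasurableEmbedding (fun x : ℝ => (x, x)) :=
    hdiagm.measurableEmbedding fun a b hab => congrArg Prod.fst hab
  set γ : Measure (ℝ × ℝ) := μ.map (fun x => (x, x)) with hγdef
  have hγ : γ ∈ Couplings μ μ := by
    constructor
    · rw [hγdef, Measure.map_map measurable_fst hdiagm]
      exact Measure.map_id
    · rw [hγdef, Measure.map_map measurable_snd hdiagm]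
      exact Measure.map_id
  have hAW : AW1 μ κ' μ κ ≤ ∫ p, (|p.1 - p.2| + W1 (κ' p.1) (κ p.2)) ∂γ := by
    refine csInf_le ⟨0, ?_⟩ ⟨γ, hγ, rfl⟩
    rintro x ⟨γ', -, rfl⟩
    exact integral_nonneg fun p => add_nonneg (abs_nonneg _) (W1_nonneg_s13 _ _)
  refine hAW.trans ?_
  rw [hγdef, hdiag.integral_map]
  have : ∫ x, (|x - x| + W1 (κ' x) (κ x)) ∂μ ≤ ∫ x, g x ∂μ := by
    refine integral_mono_of_nonneg ?_ hgInt ?_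
    · filter_upwards with x
      exact add_nonneg (abs_nonneg _) (W1_nonneg_s13 _ _)
    · filter_upwards with x
      simp only [sub_self, abs_zero, zero_add]
      exact key x
  exact this.trans (le_of_eq hνμ.symm)
end
end
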